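/- arXiv:1407.3597 — 14 statements merged into one kernel-verified Lean document; each statement's English description precedes it below -/
import Mathlib

section
/- Energy equation: if x : ℝ → ℝ is twice differentiable with x'(t) ≠ 1 for all t and x solves the equation (E), then the function t ↦ cos²(x(t))·(2x'(t) − 1)/(1 − x'(t))² is constant on ℝ; in particular its value equals cos²(x(0))·(2x'(0) − 1)/(1 − x'(0))² for all t. -/
/-- Energy equation: if `x` is a twice differentiable solution of
`(E): d/dt(cos x / (1 - x')) = - sin x` with `x'(t) ≠ 1` everywhere, then
`t ↦ cos²(x t) (2 x' t - 1) / (1 - x' t)²` is constant; in particular it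
always equals its value at `t = 0`. -/
theorem energy_equation (x : ℝ → ℝ)
    (hx1 : Differentiable ℝ x) (hx2 : Differentiable ℝ (deriv x))
    (hne : ∀ t : ℝ, deriv x t ≠ 1)
    (heq : ∀ t : ℝ,
      Real.cos (x t) * deriv (deriv x) t / (1 - deriv x t) ^ 2
        - Real.sin (x t) * deriv x t / (1 - deriv x t) = - Real.sin (x t)) :
    ∀ t : ℝ,
      Real.cos (x t) ^ 2 * (2 * deriv x t - 1) / (1 - deriv x t) ^ 2
        = Real.cos (x 0) ^ 2 * (2 * deriv x 0 - 1) / (1 - deriv x 0) ^ 2 := by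
  have h1 : ∀ t : ℝ, 1 - deriv x t ≠ 0 := fun t => sub_ne_zero.mpr (fun h => hne t h.symm)
  set g : ℝ → ℝ := fun t => Real.cos (x t) / (1 - deriv x t) with hg_def
  have hc : ∀ t : ℝ, HasDerivAt (fun t => Real.cos (x t)) (-Real.sin (x t) * deriv x t) t :=
    fun t => (Real.hasDerivAt_cos (x t)).comp t (hx1 t).hasDerivAt
  have hd : ∀ t : ℝ, HasDerivAt (fun t => 1 - deriv x t) (-(deriv (deriv x) t)) t := by
    intro t
    exact (hx2 t).hasDerivAt.const_sub 1
  have hg : ∀ t : ℝ, HasDerivAt g (-Real.sin (x t)) t := by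
    intro t
    have h := (hc t).div (hd t) (h1 t)
    have hs := h1 t
    have key : (-Real.sin (x t) * deriv x t * (1 - deriv x t) -
        Real.cos (x t) * -(deriv (deriv x) t)) / (1 - deriv x t) ^ 2 = -Real.sin (x t) := by
      rw [show (-Real.sin (x t) * deriv x t * (1 - deriv x t) -
          Real.cos (x t) * -(deriv (deriv x) t)) / (1 - deriv x t) ^ 2
        = Real.cos (x t) * deriv (deriv x) t / (1 - deriv x t) ^ 2
          - Real.sin (x t) * deriv x t / (1 - deriv x t) from by field_simp; ring]
      exact heq t
    rwa [key] at h
  have hgc : ∀ s : ℝ, g s * (1 - deriv x s) = Real.cos (x s) :=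
    fun s => div_mul_cancel₀ _ (h1 s)
  set F : ℝ → ℝ := fun t => g t ^ 2 - 2 * g t * Real.cos (x t) with hF_def
  have hF : ∀ t : ℝ, HasDerivAt F 0 t := by
    intro t
    have h := (((hg t).pow 2).sub (((hg t).const_mul 2).mul (hc t)))
    convert h using 1
    · rfl
    · rfl
    · rfl
    push_cast
    linear_combination 2 * Real.sin (x t) * hgc t
  have hconst : ∀ t : ℝ, F t = F 0 := by
    intro t
    exact is_const_of_deriv_eq_zero (fun s => (hF s).differentiableAt)
      (fun s => (hF s).deriv) t 0
  intro t
  have e : ∀ s : ℝ, Real.cos (x s) ^ 2 * (2 * deriv x s - 1) / (1 - deriv x s) ^ 2 = F s := by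
    intro s
    have hs := h1 s
    have key : Real.cos (x s) ^ 2 * (2 * deriv x s - 1) = F s * (1 - deriv x s) ^ 2 := by
      simp only [hF_def]
      linear_combination (-(g s * (1 - deriv x s) - Real.cos (x s)
        + 2 * Real.cos (x s) * deriv x s)) * hgc s
    rw [div_eq_iff (pow_ne_zero 2 hs), key]
  rw [e t, e 0, hconst t]
end

section
/- If x : ℝ → ℝ is twice differentiable with x'(t) ≠ 1 for all t, x solves the equation (E), x(0) = a, x'(0) = b with b ≠ 1, and cos x(t) ≠ 0 for all t, then setting c = (2b − 1)cos²a/(1 − b)², one has x'(t)²/(1 − x'(t))² = 1 + c/cos²(x(t)) for all t ∈ ℝ. -/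
/-- If `x` is a twice differentiable solution of
`(E): d/dt(cos x / (1 - x')) = - sin x` with `x'(t) ≠ 1` everywhere,
`x 0 = a`, `x' 0 = b ≠ 1`, and `cos (x t) ≠ 0` everywhere, then with
`c = (2b - 1) cos² a / (1 - b)²` one has
`x'(t)² / (1 - x'(t))² = 1 + c / cos²(x t)` for all `t`. -/
theorem energy_equation_sec_form (x : ℝ → ℝ) (a b c : ℝ)
    (hx1 : Differentiable ℝ x) (hx2 : Differentiable ℝ (deriv x))
    (hne : ∀ t : ℝ, deriv x t ≠ 1)
    (heq : ∀ t : ℝ,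
      Real.cos (x t) * deriv (deriv x) t / (1 - deriv x t) ^ 2
        - Real.sin (x t) * deriv x t / (1 - deriv x t) = - Real.sin (x t))
    (ha : x 0 = a) (hb : deriv x 0 = b) (hb1 : b ≠ 1)
    (hcos : ∀ t : ℝ, Real.cos (x t) ≠ 0)
    (hc : c = (2 * b - 1) * Real.cos a ^ 2 / (1 - b) ^ 2) :
    ∀ t : ℝ,
      (deriv x t) ^ 2 / (1 - deriv x t) ^ 2 = 1 + c / Real.cos (x t) ^ 2 := by
  set H : ℝ → ℝ := fun t =>
    Real.cos (x t) ^ 2 * (2 * deriv x t - 1) / (1 - deriv x t) ^ 2 with hH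
  have hd : ∀ t : ℝ, (1 - deriv x t) ≠ 0 := by
    intro t
    have := hne t
    intro h
    apply this
    linarith
  -- key consequence of the ODE, cleared of denominators
  have key : ∀ t : ℝ, Real.cos (x t) * deriv (deriv x) t
      = Real.sin (x t) * (1 - deriv x t) * (2 * deriv x t - 1) := by
    intro t
    have h := heq t
    field_simp [hd t] at h
    refine mul_left_cancel₀ (hd t) ?_
    linear_combination (1 - deriv x t) * h
  have hH0 : ∀ t : ℝ, HasDerivAt H 0 t := by
    intro t
    have h1 : HasDerivAt x (deriv x t) t := (hx1 t).hasDerivAt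
    have h2 : HasDerivAt (deriv x) (deriv (deriv x) t) t := (hx2 t).hasDerivAt
    have hcosx : HasDerivAt (fun s => Real.cos (x s))
        (-Real.sin (x t) * deriv x t) t :=
      (Real.hasDerivAt_cos (x t)).comp t h1
    have hN : HasDerivAt (fun s => Real.cos (x s) ^ 2 * (2 * deriv x s - 1))
        (2 * Real.cos (x t) ^ 1 * (-Real.sin (x t) * deriv x t) * (2 * deriv x t - 1)
          + Real.cos (x t) ^ 2 * (2 * deriv (deriv x) t)) t := by
      have := (hcosx.fun_pow 2).mul (((h2.const_mul 2).sub_const 1))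
      refine this.congr_deriv ?_
      norm_num
    have hD : HasDerivAt (fun s => (1 - deriv x s) ^ 2)
        (2 * (1 - deriv x t) ^ 1 * (-deriv (deriv x) t)) t := by
      have := (h2.const_sub 1).fun_pow 2
      refine this.congr_deriv ?_
      norm_num
    have hdiv := hN.div hD (pow_ne_zero 2 (hd t))
    have hzero :
        ((2 * Real.cos (x t) ^ 1 * (-Real.sin (x t) * deriv x t) * (2 * deriv x t - 1)
          + Real.cos (x t) ^ 2 * (2 * deriv (deriv x) t)) * (1 - deriv x t) ^ 2
          - Real.cos (x t) ^ 2 * (2 * deriv x t - 1)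
            * (2 * (1 - deriv x t) ^ 1 * (-deriv (deriv x) t)))
          / ((1 - deriv x t) ^ 2) ^ 2 = 0 := by
      rw [div_eq_zero_iff]
      left
      have k := key t
      linear_combination (2 * (1 - deriv x t) * Real.cos (x t) * deriv x t) * k
    rw [hzero] at hdiv
    exact hdiv
  have hHdiff : Differentiable ℝ H := fun t => (hH0 t).differentiableAt
  have hHderiv : ∀ t : ℝ, deriv H t = 0 := fun t => (hH0 t).deriv
  have hconst : ∀ t : ℝ, H t = H 0 :=
    fun t => is_const_of_deriv_eq_zero hHdiff hHderiv t 0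
  intro t
  have hHt : H t = c := by
    rw [hconst t, hH]
    simp only [ha, hb, hc]
    ring
  have hct := hcos t
  have hdt := hd t
  have : Real.cos (x t) ^ 2 * (2 * deriv x t - 1) / (1 - deriv x t) ^ 2 = c := hHt
  rw [div_eq_iff (pow_ne_zero 2 hdt)] at this
  field_simp
  linear_combination this
end

section
/- If x : ℝ → ℝ is twice differentiable with x'(t) ≠ 1 for all t, x solves the equation (E), x(0) = a with |a| < π/2, x'(0) = b with b < 1/2, and |a| + |b| > 0, then cos x(t) ≠ 0 for all t and x'(t) < 1/2 for all t ∈ ℝ; that is, the orbit stays in the half-plane x' < 1/2. -/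
/-- If `x` is a twice differentiable solution of
`(E): d/dt(cos x / (1 - x')) = - sin x` with `x'(t) ≠ 1` everywhere,
`x 0 = a` with `|a| < π/2`, `x' 0 = b` with `b < 1/2`, and `|a| + |b| > 0`,
then `cos (x t) ≠ 0` and `x'(t) < 1/2` for all `t`: the orbit stays in the
half-plane `x' < 1/2`. -/
theorem orbit_stays_below_half (x : ℝ → ℝ) (a b : ℝ)
    (hx1 : Differentiable ℝ x) (hx2 : Differentiable ℝ (deriv x))
    (hne : ∀ t : ℝ, deriv x t ≠ 1)
    (heq : ∀ t : ℝ,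
      Real.cos (x t) * deriv (deriv x) t / (1 - deriv x t) ^ 2
        - Real.sin (x t) * deriv x t / (1 - deriv x t) = - Real.sin (x t))
    (ha : x 0 = a) (haa : |a| < Real.pi / 2)
    (hb : deriv x 0 = b) (hbb : b < 1 / 2)
    (hab : |a| + |b| > 0) :
    (∀ t : ℝ, Real.cos (x t) ≠ 0) ∧ (∀ t : ℝ, deriv x t < 1 / 2) := by
  have hden : ∀ t : ℝ, 1 - deriv x t ≠ 0 := fun t => sub_ne_zero.mpr (Ne.symm (hne t))
  set y : ℝ → ℝ := fun t => Real.cos (x t) / (1 - deriv x t) with hy_def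
  have hy : ∀ t : ℝ, HasDerivAt y (-Real.sin (x t)) t := by
    intro t
    have hN : HasDerivAt (fun s => Real.cos (x s)) (-Real.sin (x t) * deriv x t) t :=
      (Real.hasDerivAt_cos (x t)).comp t (hx1 t).hasDerivAt
    have hD : HasDerivAt (fun s => 1 - deriv x s) (0 - deriv (deriv x) t) t :=
      (hasDerivAt_const t (1:ℝ)).sub (hx2 t).hasDerivAt
    have h := hN.div hD (hden t)
    refine h.congr_deriv (Eq.symm ?_)
    have he := heq t
    field_simp [hden t] at he
    rw [eq_div_iff (pow_ne_zero 2 (hden t))]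
    apply mul_left_cancel₀ (hden t)
    linear_combination -(1 - deriv x t) * he
  set K : ℝ → ℝ := fun t => y t ^ 2 - 2 * y t * Real.cos (x t) with hK_def
  have hK : ∀ t : ℝ, HasDerivAt K 0 t := by
    intro t
    have hc : HasDerivAt (fun s => Real.cos (x s)) (-Real.sin (x t) * deriv x t) t :=
      (Real.hasDerivAt_cos (x t)).comp t (hx1 t).hasDerivAt
    have h := ((hy t).pow 2).sub (((hy t).const_mul 2).mul hc)
    refine h.congr_deriv (Eq.symm ?_)
    have hyc : y t * (1 - deriv x t) = Real.cos (x t) := by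
      simp only [hy_def]
      exact div_mul_cancel₀ _ (hden t)
    linear_combination 2 * Real.sin (x t) * hyc
  have hKconst : ∀ t : ℝ, K t = K 0 := by
    intro t
    exact is_const_of_deriv_eq_zero (fun s => (hK s).differentiableAt)
      (fun s => (hK s).deriv) t 0
  -- K 0 < 0
  have hcosa : Real.cos a > 0 := Real.cos_pos_of_mem_Ioo ⟨neg_lt_of_abs_lt haa, lt_of_abs_lt haa⟩
  have hK0 : K 0 < 0 := by
    have hd0 : (1:ℝ) - b ≠ 0 := by
      rw [← hb]; exact hden 0
    have hy0 : y 0 = Real.cos a / (1 - b) := by simp [hy_def, ha, hb]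
    have : K 0 = Real.cos a ^ 2 * (2 * b - 1) / (1 - b) ^ 2 := by
      simp only [hK_def, hy0, ha]
      field_simp
      ring
    rw [this]
    apply div_neg_of_neg_of_pos
    · nlinarith [pow_pos hcosa 2]
    · positivity
  have key : ∀ t : ℝ, Real.cos (x t) ≠ 0 ∧ deriv x t < 1 / 2 := by
    intro t
    have hKt : K t < 0 := by rw [hKconst t]; exact hK0
    have hyc : y t * (1 - deriv x t) = Real.cos (x t) := by
      simp only [hy_def]; exact div_mul_cancel₀ _ (hden t)
    have hKt' : K t = y t ^ 2 * (2 * deriv x t - 1) := by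
      simp only [hK_def, ← hyc]; ring
    have hy_ne : y t ≠ 0 := by
      intro h0
      rw [hKt', h0] at hKt
      simp at hKt
    constructor
    · intro h0
      rw [← hyc] at h0
      exact hy_ne (by
        rcases mul_eq_zero.mp h0 with h | h
        · exact h
        · exact absurd h (hden t))
    · have hy2 : 0 < y t ^ 2 :=
        lt_of_le_of_ne (sq_nonneg (y t)) (Ne.symm (pow_ne_zero 2 hy_ne))
      have hKt2 : y t ^ 2 * (2 * deriv x t - 1) < 0 := hKt' ▸ hKt
      nlinarith [hy2, hKt2]
  exact ⟨fun t => (key t).1, fun t => (key t).2⟩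
end

section
/- Suppose x : ℝ → ℝ is twice differentiable with x'(t) ≠ 1 for all t, x solves the equation (E), x(0) = a with |a| < π/2, x'(0) = b with b < 1/2, and |a| + |b| > 0. Set c = (2b − 1)cos²a/(1 − b)². Then c ∈ (−1, 0), and for all t ∈ ℝ one has cos²(x(t)) ≥ −c and −√(1+c)/(1 − √(1+c)) ≤ x'(t) ≤ √(1+c)/(1 + √(1+c)). -/
set_option maxHeartbeats 1000000 in
/-- Under the hypotheses of the periodic case `b < 1/2`, the energy constant
`c = (2b - 1) cos² a / (1 - b)²` lies in `(-1, 0)`, and for all `t` one has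
`cos²(x t) ≥ -c` and `-√(1+c)/(1 - √(1+c)) ≤ x'(t) ≤ √(1+c)/(1 + √(1+c))`. -/
theorem bounded_orbit_bounds (x : ℝ → ℝ) (a b c : ℝ)
    (hx1 : Differentiable ℝ x) (hx2 : Differentiable ℝ (deriv x))
    (hne : ∀ t : ℝ, deriv x t ≠ 1)
    (heq : ∀ t : ℝ,
      Real.cos (x t) * deriv (deriv x) t / (1 - deriv x t) ^ 2
        - Real.sin (x t) * deriv x t / (1 - deriv x t) = - Real.sin (x t))
    (ha : x 0 = a) (haa : |a| < Real.pi / 2)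
    (hb : deriv x 0 = b) (hbb : b < 1 / 2)
    (hab : |a| + |b| > 0)
    (hc : c = (2 * b - 1) * Real.cos a ^ 2 / (1 - b) ^ 2) :
    (-1 < c ∧ c < 0) ∧
      ∀ t : ℝ,
        Real.cos (x t) ^ 2 ≥ -c ∧
        -Real.sqrt (1 + c) / (1 - Real.sqrt (1 + c)) ≤ deriv x t ∧
        deriv x t ≤ Real.sqrt (1 + c) / (1 + Real.sqrt (1 + c)) := by
  have hcont : Continuous (deriv x) := hx2.continuous
  have hvlt : ∀ t, deriv x t < 1 := by
    intro t
    by_contra h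
    push_neg at h
    have h1 : (1:ℝ) ∈ Set.uIcc (deriv x 0) (deriv x t) := by
      rw [hb, Set.mem_uIcc]; left; constructor <;> linarith
    obtain ⟨s, _, hs⟩ := intermediate_value_uIcc hcont.continuousOn h1
    exact hne s hs
  have hpos : ∀ t, 0 < 1 - deriv x t := fun t => by linarith [hvlt t]
  set E : ℝ → ℝ := fun t =>
      (Real.cos (x t) * deriv x t / (1 - deriv x t)) ^ 2 - Real.cos (x t) ^ 2 with hEdef
  have hE0 : ∀ t, HasDerivAt E 0 t := by
    intro t
    have hx' : HasDerivAt x (deriv x t) t := (hx1 t).hasDerivAt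
    have hv' : HasDerivAt (deriv x) (deriv (deriv x) t) t := (hx2 t).hasDerivAt
    have hcos : HasDerivAt (fun s => Real.cos (x s)) (-Real.sin (x t) * deriv x t) t := hx'.cos
    have hnum := hcos.mul hv'
    have hden : HasDerivAt (fun s => 1 - deriv x s) (-(deriv (deriv x) t)) t := by
      exact hv'.const_sub 1
    have hq := hnum.div hden (ne_of_gt (hpos t))
    have hEd := (hq.pow 2).sub (hcos.pow 2)
    refine hEd.congr_deriv (Eq.symm ?_)
    have hne' : (1 : ℝ) - deriv x t ≠ 0 := ne_of_gt (hpos t)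
    have hkey : Real.cos (x t) * deriv (deriv x) t
        = Real.sin (x t) * (1 - deriv x t) * (2 * deriv x t - 1) := by
      have h := heq t
      field_simp at h
      have h2 : (Real.cos (x t) * deriv (deriv x) t
          - Real.sin (x t) * (1 - deriv x t) * (2 * deriv x t - 1)) * (1 - deriv x t) = 0 := by
        linear_combination (1 - deriv x t) * h
      rcases mul_eq_zero.mp h2 with h3 | h3
      · linarith
      · exact absurd h3 hne'
    push_cast
    simp only [Pi.mul_apply, Pi.div_apply]
    field_simp
    linear_combination (-2 * Real.cos (x t) * deriv x t) * hkey
  have hconst := is_const_of_deriv_eq_zero (fun t => (hE0 t).differentiableAt)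
    (fun t => (hE0 t).deriv)
  have hcospos : 0 < Real.cos a := by
    apply Real.cos_pos_of_mem_Ioo
    constructor <;> [linarith [abs_lt.1 haa]; linarith [abs_lt.1 haa]]
  have hEc : ∀ t, E t = c := by
    intro t
    have := hconst t 0
    rw [this]
    simp only [hEdef, ha, hb, hc]
    have h1 : (1:ℝ) - b ≠ 0 := by have := hpos 0; rw [hb] at this; linarith
    field_simp
    ring
  have hbpos : (0:ℝ) < 1 - b := by linarith
  have hden : (0:ℝ) < (1 - b) ^ 2 := by positivity
  have hcle : Real.cos a ^ 2 ≤ 1 := Real.cos_sq_le_one a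
  have hcneg : c < 0 := by
    rw [hc]
    apply div_neg_of_neg_of_pos _ hden
    have h2 : (0:ℝ) < Real.cos a ^ 2 := by positivity
    nlinarith
  have hcgt : -1 < c := by
    rw [hc, lt_div_iff₀ hden]
    rcases eq_or_ne b 0 with rfl | hb0
    · have ha0 : a ≠ 0 := by
        intro h; rw [h] at hab; simp at hab
      have hlt : Real.cos a < 1 := by
        have h1 : Real.cos |a| < Real.cos 0 := by
          apply Real.cos_lt_cos_of_nonneg_of_le_pi le_rfl (by linarith [Real.pi_pos])
          exact abs_pos.mpr ha0
        rw [Real.cos_zero, Real.cos_abs] at h1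
        exact h1
      nlinarith
    · have : b ^ 2 > 0 := by positivity
      nlinarith
  refine ⟨⟨hcgt, hcneg⟩, fun t => ?_⟩
  have hE := hEc t
  simp only [hEdef] at hE
  have hne' : (1:ℝ) - deriv x t ≠ 0 := ne_of_gt (hpos t)
  set w := deriv x t with hw
  set c1 := Real.cos (x t) with hc1
  have hK : (c1 * w) ^ 2 = (c1 ^ 2 + c) * (1 - w) ^ 2 := by
    field_simp at hE
    linarith [hE]
  have hwpos : (0:ℝ) < (1 - w) ^ 2 := by positivity
  have h1 : 0 ≤ c1 ^ 2 + c := by nlinarith [sq_nonneg (c1 * w)]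
  have hc1le : c1 ^ 2 ≤ 1 := Real.cos_sq_le_one (x t)
  have hc1pos : 0 < c1 ^ 2 := by linarith
  have hid : c1 ^ 2 * ((1 + c) * (1 - w) ^ 2 - w ^ 2) = (1 - w) ^ 2 * ((-c) * (1 - c1 ^ 2)) := by
    linear_combination (1 - w)^2 * hK - hK * (1-w)^2 + (-(1:ℝ)) * hK
  have hw2 : w ^ 2 ≤ (1 + c) * (1 - w) ^ 2 := by
    nlinarith [mul_nonneg (mul_nonneg hwpos.le (neg_nonneg.mpr hcneg.le)) (by linarith : (0:ℝ) ≤ 1 - c1 ^ 2)]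
  have h1c : (0:ℝ) < 1 + c := by linarith
  set s := Real.sqrt (1 + c) with hs
  have hs2 : s ^ 2 = 1 + c := Real.sq_sqrt h1c.le
  have hspos : 0 < s := Real.sqrt_pos.mpr h1c
  have hslt : s < 1 := (Real.sqrt_lt' one_pos).mpr (by linarith)
  have habs : w ^ 2 ≤ (s * (1 - w)) ^ 2 := by rw [mul_pow, hs2]; exact hw2
  have hA : 0 ≤ s * (1 - w) := le_of_lt (mul_pos hspos (hpos t))
  have habs2 := abs_le_of_sq_le_sq' habs hA
  refine ⟨by linarith, ?_, ?_⟩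
  · rw [div_le_iff₀ (by linarith : (0:ℝ) < 1 - s)]
    nlinarith [habs2.1, mul_pos hspos (hpos t)]
  · rw [le_div_iff₀ (by linarith : (0:ℝ) < 1 + s)]
    nlinarith [habs2.2, mul_pos hspos (hpos t)]
end

section
/- For all t ∈ ℝ, D(t) = (A cos t + B sin t)² + (2(1 − b) + B cos t − A sin t)², and D(t) > 0 for every t; that is, the two squares never vanish simultaneously. -/
/-- With `A = sin 2a`, `B = 2b - 1 + cos 2a` and
`D t = A² + B² + 4(1-b)(B cos t - A sin t) + 4(1-b)²`, for all `t` one has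
`D t = (A cos t + B sin t)² + (2(1-b) + B cos t - A sin t)²` and `D t > 0`:
the two squares never vanish simultaneously. -/
theorem denominator_positive (a b : ℝ)
    (ha : |a| < Real.pi / 2) (hb2 : b ≠ 1 / 2) (hb1 : b ≠ 1)
    (hab : |a| + |b| > 0)
    (A B : ℝ) (hA : A = Real.sin (2 * a)) (hB : B = 2 * b - 1 + Real.cos (2 * a))
    (D : ℝ → ℝ)
    (hD : ∀ t : ℝ, D t =
      A ^ 2 + B ^ 2 + 4 * (1 - b) * (B * Real.cos t - A * Real.sin t)
        + 4 * (1 - b) ^ 2) :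
    ∀ t : ℝ,
      D t = (A * Real.cos t + B * Real.sin t) ^ 2
              + (2 * (1 - b) + B * Real.cos t - A * Real.sin t) ^ 2
        ∧ D t > 0 := by
  have ha' := abs_lt.mp ha
  have hcos : Real.cos a > 0 := Real.cos_pos_of_mem_Ioo ⟨ha'.1, ha'.2⟩
  have hb : 2 * b - 1 ≠ 0 := fun h => hb2 (by linarith)
  have hkey : A ^ 2 + B ^ 2 - 4 * (1 - b) ^ 2 = 4 * (2 * b - 1) * Real.cos a ^ 2 := by
    have hp := Real.sin_sq_add_cos_sq a
    rw [hA, hB, Real.cos_two_mul, Real.sin_two_mul]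
    linear_combination (4 * Real.cos a ^ 2) * hp
  intro t
  have hpyth := Real.sin_sq_add_cos_sq t
  have heq : D t = (A * Real.cos t + B * Real.sin t) ^ 2
      + (2 * (1 - b) + B * Real.cos t - A * Real.sin t) ^ 2 := by
    rw [hD t]; linear_combination (-(A ^ 2 + B ^ 2)) * hpyth
  refine ⟨heq, ?_⟩
  by_contra hle
  push_neg at hle
  rw [heq] at hle
  have hx0 : A * Real.cos t + B * Real.sin t = 0 := by
    nlinarith [sq_nonneg (A * Real.cos t + B * Real.sin t),
      sq_nonneg (2 * (1 - b) + B * Real.cos t - A * Real.sin t)]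
  have hy0 : 2 * (1 - b) + B * Real.cos t - A * Real.sin t = 0 := by
    nlinarith [sq_nonneg (A * Real.cos t + B * Real.sin t),
      sq_nonneg (2 * (1 - b) + B * Real.cos t - A * Real.sin t)]
  have hxy : (A * Real.cos t + B * Real.sin t) ^ 2
      + (B * Real.cos t - A * Real.sin t) ^ 2 = A ^ 2 + B ^ 2 := by
    linear_combination (A ^ 2 + B ^ 2) * hpyth
  have hc2 : Real.cos a ^ 2 > 0 := by positivity
  have hzero : 4 * (2 * b - 1) * Real.cos a ^ 2 = 0 := by nlinarith
  rcases mul_eq_zero.mp hzero with h | h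
  · rcases mul_eq_zero.mp h with h | h
    · norm_num at h
    · exact hb h
  · exact absurd h (ne_of_gt hc2)
end

section
/- At every t ∈ ℝ with 2(1 − b) + B cos t − A sin t ≠ 0, the function X is differentiable and satisfies X'(t) = (1 + X(t)²)·v(t); moreover X(0) = tan a and v(0) = b. -/
set_option maxRecDepth 8000


/-- With `A = sin 2a`, `B = 2b - 1 + cos 2a`,
`D t = A² + B² + 4(1-b)(B cos t - A sin t) + 4(1-b)²`,
`v t = 1/2 + 2(2b-1) cos² a / D t` and
`X t = (A cos t + B sin t) / (2(1-b) + B cos t - A sin t)`: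
at every `t` where the denominator of `X` does not vanish, `X` is
differentiable and `X'(t) = (1 + X(t)²) v(t)`; moreover `X 0 = tan a` and
`v 0 = b`. -/
theorem X_derivative (a b : ℝ)
    (ha : |a| < Real.pi / 2) (hb2 : b ≠ 1 / 2) (hb1 : b ≠ 1)
    (hab : |a| + |b| > 0)
    (A B : ℝ) (hA : A = Real.sin (2 * a)) (hB : B = 2 * b - 1 + Real.cos (2 * a))
    (D v X : ℝ → ℝ)
    (hD : ∀ t : ℝ, D t =
      A ^ 2 + B ^ 2 + 4 * (1 - b) * (B * Real.cos t - A * Real.sin t)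
        + 4 * (1 - b) ^ 2)
    (hv : ∀ t : ℝ, v t = 1 / 2 + 2 * (2 * b - 1) * Real.cos a ^ 2 / D t)
    (hX : ∀ t : ℝ, X t =
      (A * Real.cos t + B * Real.sin t)
        / (2 * (1 - b) + B * Real.cos t - A * Real.sin t)) :
    (∀ t : ℝ, 2 * (1 - b) + B * Real.cos t - A * Real.sin t ≠ 0 →
        DifferentiableAt ℝ X t ∧ deriv X t = (1 + X t ^ 2) * v t)
      ∧ X 0 = Real.tan a ∧ v 0 = b := by
  have habs := abs_lt.mp ha
  have hcosa : Real.cos a ≠ 0 :=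
    (Real.cos_pos_of_mem_Ioo ⟨habs.1, habs.2⟩).ne'
  have hkey : A ^ 2 + B ^ 2 = 4 * (1 - b) ^ 2 + 4 * (2 * b - 1) * Real.cos a ^ 2 := by
    rw [hA, hB, Real.sin_two_mul, Real.cos_two_mul]
    nlinarith [Real.sin_sq_add_cos_sq a]
  refine ⟨?_, ?_, ?_⟩
  · intro t hden
    have pyt := Real.sin_sq_add_cos_sq t
    have hDeq : D t = (2 * (1 - b) + B * Real.cos t - A * Real.sin t) ^ 2
        + (A * Real.cos t + B * Real.sin t) ^ 2 := by
      rw [hD]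
      linear_combination (-(A ^ 2 + B ^ 2)) * pyt
    have hDpos : 0 < D t := by
      rw [hDeq]
      have h1 : 0 < (2 * (1 - b) + B * Real.cos t - A * Real.sin t) ^ 2 := by positivity
      nlinarith [sq_nonneg (A * Real.cos t + B * Real.sin t)]
    have hf : HasDerivAt (fun s => A * Real.cos s + B * Real.sin s)
        (A * (-Real.sin t) + B * Real.cos t) t :=
      ((Real.hasDerivAt_cos t).const_mul A).add ((Real.hasDerivAt_sin t).const_mul B)
    have hg : HasDerivAt (fun s => 2 * (1 - b) + B * Real.cos s - A * Real.sin s)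
        (B * (-Real.sin t) - A * Real.cos t) t :=
      (((Real.hasDerivAt_cos t).const_mul B).const_add _).sub
        ((Real.hasDerivAt_sin t).const_mul A)
    have hXfun : X = fun s => (A * Real.cos s + B * Real.sin s)
        / (2 * (1 - b) + B * Real.cos s - A * Real.sin s) := funext hX
    have hXd : HasDerivAt X
        (((A * (-Real.sin t) + B * Real.cos t) * (2 * (1 - b) + B * Real.cos t - A * Real.sin t)
          - (A * Real.cos t + B * Real.sin t) * (B * (-Real.sin t) - A * Real.cos t))
          / (2 * (1 - b) + B * Real.cos t - A * Real.sin t) ^ 2) t := by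
      rw [hXfun]; exact hf.div hg hden
    refine ⟨hXd.differentiableAt, ?_⟩
    rw [hXd.deriv, hX t, hv t, hDeq]
    have hDne : (2 * (1 - b) + B * Real.cos t - A * Real.sin t) ^ 2
        + (A * Real.cos t + B * Real.sin t) ^ 2 ≠ 0 := by
      rw [← hDeq]; exact hDpos.ne'
    set F := A * Real.cos t + B * Real.sin t with hF
    set G := 2 * (1 - b) + B * Real.cos t - A * Real.sin t with hG
    have key : (A * -Real.sin t + B * Real.cos t) * G - F * (B * -Real.sin t - A * Real.cos t)
        = (G ^ 2 + F ^ 2) / 2 + 2 * (2 * b - 1) * Real.cos a ^ 2 := by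
      rw [hF, hG]
      linear_combination ((A ^ 2 + B ^ 2) / 2) * pyt + (1 / 2) * hkey
    rw [key]
    field_simp
  · rw [hX 0, Real.tan_eq_sin_div_cos, hA, hB, Real.sin_two_mul, Real.cos_two_mul]
    rw [Real.cos_zero, Real.sin_zero]
    have h2 : 2 * (1 - b) + (2 * b - 1 + (2 * Real.cos a ^ 2 - 1)) * 1
        - 2 * Real.sin a * Real.cos a * 0 = 2 * Real.cos a ^ 2 := by ring
    rw [h2]
    have h3 : (2 * Real.cos a ^ 2 : ℝ) ≠ 0 := by positivity
    rw [div_eq_div_iff h3 hcosa]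
    ring
  · rw [hv 0, hD 0, Real.cos_zero, Real.sin_zero]
    have hB2 : B = 2 * b - 2 + 2 * Real.cos a ^ 2 := by
      rw [hB, Real.cos_two_mul]; ring
    have hD0 : A ^ 2 + B ^ 2 + 4 * (1 - b) * (B * 1 - A * 0) + 4 * (1 - b) ^ 2
        = 4 * Real.cos a ^ 2 := by
      linear_combination hkey + (4 * (1 - b)) * hB2
    rw [hD0]
    field_simp
    ring
end

section
/- Suppose b < 1/2. Then v is continuous and periodic of period 2π and its integral over one period vanishes: ∫₀^{2π} v(t) dt = 0. -/
open intervalIntegral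

set_option maxHeartbeats 1000000 in
/-- For `b < 1/2`: with `A = sin 2a`, `B = 2b - 1 + cos 2a`,
`D t = A² + B² + 4(1-b)(B cos t - A sin t) + 4(1-b)²` and
`v t = 1/2 + 2(2b-1) cos² a / D t`, the function `v` is continuous,
`2π`-periodic, and its integral over one period vanishes. -/
theorem v_average_zero (a b : ℝ)
    (ha : |a| < Real.pi / 2) (hb2 : b ≠ 1 / 2) (hb1 : b ≠ 1)
    (hab : |a| + |b| > 0) (hbb : b < 1 / 2)
    (A B : ℝ) (hA : A = Real.sin (2 * a)) (hB : B = 2 * b - 1 + Real.cos (2 * a))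
    (D v : ℝ → ℝ)
    (hD : ∀ t : ℝ, D t =
      A ^ 2 + B ^ 2 + 4 * (1 - b) * (B * Real.cos t - A * Real.sin t)
        + 4 * (1 - b) ^ 2)
    (hv : ∀ t : ℝ, v t = 1 / 2 + 2 * (2 * b - 1) * Real.cos a ^ 2 / D t) :
    Continuous v ∧ (∀ t : ℝ, v (t + 2 * Real.pi) = v t) ∧
      (∫ t in (0:ℝ)..(2 * Real.pi), v t) = 0 := by
  have hπ := Real.pi_pos
  obtain ⟨ha1, ha2⟩ := abs_lt.1 ha
  have hcos : 0 < Real.cos a := Real.cos_pos_of_mem_Ioo ⟨ha1, ha2⟩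
  have hw : (0:ℝ) < 2 * (1 - b) := by linarith
  -- key identity
  have hr2 : A ^ 2 + B ^ 2 = 4 * (1 - b) ^ 2 + 4 * (2 * b - 1) * Real.cos a ^ 2 := by
    rw [hA, hB]
    have h1 := Real.sin_sq_add_cos_sq (2 * a)
    have h2 := Real.cos_two_mul a
    nlinarith [h1, h2]
  have hr2lt : A ^ 2 + B ^ 2 < 4 * (1 - b) ^ 2 := by nlinarith [mul_pos hcos hcos]
  -- positivity of D
  have hX : ∀ t : ℝ, (B * Real.cos t - A * Real.sin t) ^ 2 ≤ A ^ 2 + B ^ 2 := by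
    intro t
    nlinarith [sq_nonneg (A * Real.cos t + B * Real.sin t), Real.sin_sq_add_cos_sq t]
  have hDpos : ∀ t : ℝ, 0 < D t := by
    intro t
    have h1 : -(2 * (1 - b)) < B * Real.cos t - A * Real.sin t := by
      nlinarith [hX t, hr2lt]
    rw [hD]
    nlinarith [mul_pos (by linarith : (0:ℝ) < 2 * (1 - b) + (B * Real.cos t - A * Real.sin t))
      (by linarith : (0:ℝ) < 2 * (1 - b) + (B * Real.cos t - A * Real.sin t)), hX t]
  have hDne : ∀ t : ℝ, D t ≠ 0 := fun t => (hDpos t).ne'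
  -- continuity
  have hDeq : D = fun t => A ^ 2 + B ^ 2 + 4 * (1 - b) * (B * Real.cos t - A * Real.sin t)
        + 4 * (1 - b) ^ 2 := funext hD
  have hDc : Continuous D := by rw [hDeq]; continuity
  have hveq : v = fun t => 1 / 2 + 2 * (2 * b - 1) * Real.cos a ^ 2 / D t := funext hv
  have hvc : Continuous v := by
    rw [hveq]
    exact continuous_const.add (continuous_const.div hDc hDne)
  refine ⟨hvc, ?_, ?_⟩
  · intro t
    rw [hv, hv, hD, hD, Real.cos_add_two_pi, Real.sin_add_two_pi]
  -- positivity of A^2+B^2 (needed for z ≠ 0)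
  have hr2pos : 0 < A ^ 2 + B ^ 2 := by
    rcases eq_or_ne b 0 with rfl | hb0
    · have ha0 : a ≠ 0 := by
        intro h; rw [h] at hab; simp at hab
      have hsin : Real.sin a ≠ 0 := by
        rcases lt_or_gt_of_ne ha0 with h | h
        · exact ne_of_lt (Real.sin_neg_of_neg_of_neg_pi_lt h (by linarith))
        · exact ne_of_gt (Real.sin_pos_of_pos_of_lt_pi h (by linarith))
      have hcl : Real.cos a ^ 2 < 1 := by
        nlinarith [Real.sin_sq_add_cos_sq a, mul_self_pos.mpr hsin]
      rw [hr2]; nlinarith [hcl]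
    · have hb2' : b ^ 2 > 0 := by positivity
      have hc1 : Real.cos a ^ 2 ≤ 1 := by
        nlinarith [Real.sin_sq_add_cos_sq a, sq_nonneg (Real.sin a)]
      rw [hr2]
      nlinarith [hb2', hc1, mul_nonneg (by linarith : (0:ℝ) ≤ 1 - 2 * b)
        (by nlinarith [hc1] : (0:ℝ) ≤ 1 - Real.cos a ^ 2)]
  -- complex setup
  obtain ⟨w, hwdef⟩ : ∃ w : ℝ, w = 2 * (1 - b) := ⟨_, rfl⟩
  obtain ⟨z, hzdef⟩ : ∃ z : ℂ, z = (B : ℂ) - (A : ℂ) * Complex.I := ⟨_, rfl⟩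
  have hw0 : (0:ℝ) < w := by rw [hwdef]; linarith
  have hznormSq : Complex.normSq z = A ^ 2 + B ^ 2 := by
    simp [hzdef, Complex.normSq_apply]; ring
  have hz0 : z ≠ 0 := by
    intro h
    rw [h, map_zero] at hznormSq
    exact absurd hznormSq.symm (ne_of_gt hr2pos)
  have hzbar0 : (starRingEnd ℂ) z ≠ 0 := by simpa using hz0
  have hwC0 : ((w : ℝ) : ℂ) ≠ 0 := by exact_mod_cast hw0.ne'
  -- D as a norm squared
  have hDnormSq : ∀ t : ℝ, D t
      = Complex.normSq (z + (w : ℂ) * Complex.exp ((t : ℂ) * Complex.I)) := by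
    intro t
    rw [hD, hzdef, hwdef]
    simp only [Complex.normSq_apply, Complex.add_re, Complex.add_im, Complex.mul_re,
      Complex.mul_im, Complex.sub_re, Complex.sub_im, Complex.ofReal_re, Complex.ofReal_im,
      Complex.mul_I_re, Complex.mul_I_im, Complex.I_re, Complex.I_im,
      Complex.exp_ofReal_mul_I_re, Complex.exp_ofReal_mul_I_im]
    have := Real.sin_sq_add_cos_sq t
    ring_nf
    nlinarith [Real.sin_sq_add_cos_sq t]
  have hne : ∀ t : ℝ, z + (w : ℂ) * Complex.exp ((t : ℂ) * Complex.I) ≠ 0 := by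
    intro t h
    have := hDpos t
    rw [hDnormSq t, h, map_zero] at this
    exact lt_irrefl _ this
  -- abs z < w
  have habsz : ‖z‖ < w := by
    have h1 : ‖z‖ ^ 2 < w ^ 2 := by
      rw [Complex.sq_norm, hznormSq, hwdef]; nlinarith
    nlinarith [norm_nonneg z, hw0]
  have habszpos : 0 < ‖z‖ := norm_pos_iff.mpr hz0
  -- poles
  obtain ⟨p, hpdef⟩ : ∃ p : ℂ, p = -z / (w : ℂ) := ⟨_, rfl⟩
  obtain ⟨q, hqdef⟩ : ∃ q : ℂ, q = -((w : ℝ) : ℂ) / (starRingEnd ℂ) z := ⟨_, rfl⟩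
  have habsp : ‖p‖ < 1 := by
    have h : ‖p‖ = ‖z‖ / w := by
      rw [hpdef, norm_div, norm_neg, Complex.norm_of_nonneg hw0.le]
    rw [h, div_lt_one hw0]
    exact habsz
  have habsq : 1 < ‖q‖ := by
    have h : ‖q‖ = w / ‖z‖ := by
      rw [hqdef, norm_div, norm_neg, Complex.norm_conj, Complex.norm_of_nonneg hw0.le]
    rw [h, lt_div_iff₀ habszpos, one_mul]
    exact habsz
  obtain ⟨sR, hsRdef⟩ : ∃ sR : ℝ, sR = w ^ 2 - (A ^ 2 + B ^ 2) := ⟨_, rfl⟩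
  have hsRpos : 0 < sR := by rw [hsRdef, hwdef]; nlinarith
  have hsC0 : ((sR : ℝ) : ℂ) ≠ 0 := by exact_mod_cast hsRpos.ne'
  have hsC : ((sR : ℝ) : ℂ) = ((w : ℝ) : ℂ) ^ 2 - z * (starRingEnd ℂ) z := by
    rw [Complex.mul_conj, hznormSq]
    push_cast [hsRdef]
    ring
  obtain ⟨f, hfdef⟩ : ∃ f : ℂ → ℂ,
      f = fun u => (Complex.I * (sR : ℂ))⁻¹ * ((u - p)⁻¹ - (u - q)⁻¹) := ⟨_, rfl⟩
  -- circle integrals of basic functions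
  have hint1 : (∮ u in C(0, 1), (u - p)⁻¹) = 2 * Real.pi * Complex.I :=
    circleIntegral.integral_sub_inv_of_mem_ball (by
      simpa [Complex.dist_eq] using habsp)
  have hint2 : (∮ u in C(0, 1), (u - q)⁻¹) = 0 := by
    apply Complex.circleIntegral_eq_zero_of_differentiable_on_off_countable zero_le_one
      Set.countable_empty
    · apply (continuousOn_id.sub continuousOn_const).inv₀
      intro u hu
      simp only [Metric.mem_closedBall, dist_zero_right] at hu
      intro h
      rw [Pi.sub_apply, sub_eq_zero, id_eq] at h
      rw [h] at hu
      linarith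
    · intro u hu
      rw [Set.diff_empty, Metric.mem_ball, dist_zero_right] at hu
      refine (differentiableAt_id.sub_const q).inv fun h => ?_
      rw [sub_eq_zero, id_eq] at h
      rw [h] at hu
      linarith
  have hci1 : CircleIntegrable (fun u => (u - p)⁻¹) 0 1 := by
    rw [circleIntegrable_sub_inv_iff]
    right
    simp only [Metric.mem_sphere, dist_zero_right]
    rw [abs_one]
    exact fun h => absurd h (ne_of_lt habsp)
  have hci2 : CircleIntegrable (fun u => (u - q)⁻¹) 0 1 := by
    rw [circleIntegrable_sub_inv_iff]
    right
    simp only [Metric.mem_sphere, dist_zero_right]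
    rw [abs_one]
    exact fun h => absurd h (ne_of_gt habsq)
  have hintf : (∮ u in C(0, 1), f u) = 2 * Real.pi / (sR : ℂ) := by
    rw [hfdef]
    rw [circleIntegral.integral_const_mul]
    rw [circleIntegral.integral_sub hci1 hci2, hint1, hint2, sub_zero]
    field_simp
  -- identify the circle integral with the real interval integral
  have hkeyC : (∮ u in C(0, 1), f u) = ∫ t in (0:ℝ)..(2 * Real.pi), ((D t)⁻¹ : ℂ) := by
    rw [circleIntegral]
    apply intervalIntegral.integral_congr
    intro t ht
    have hu1 : Complex.exp ((t : ℂ) * Complex.I)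
        * (starRingEnd ℂ) (Complex.exp ((t : ℂ) * Complex.I)) = 1 := by
      rw [Complex.mul_conj]
      norm_cast
      rw [← Complex.sq_norm, Complex.norm_exp_ofReal_mul_I]
      norm_num
    obtain ⟨u, hudef⟩ : ∃ u : ℂ, u = Complex.exp ((t : ℂ) * Complex.I) := ⟨_, rfl⟩
    rw [← hudef] at hu1
    have hu0 : u ≠ 0 := by rw [hudef]; exact Complex.exp_ne_zero _
    have hzu : z + (w : ℂ) * u ≠ 0 := by rw [hudef]; exact hne t
    have hzu2 : (starRingEnd ℂ) z * u + (w : ℂ) ≠ 0 := by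
      have hrel : (starRingEnd ℂ) z * u + (w : ℂ)
          = u * (starRingEnd ℂ) (z + (w : ℂ) * u) := by
        rw [map_add, map_mul, Complex.conj_ofReal]
        linear_combination (-(w : ℂ)) * hu1
      rw [hrel]
      refine mul_ne_zero hu0 ?_
      rw [starRingEnd_apply]
      exact star_ne_zero.2 hzu
    have hDC : ((D t : ℝ) : ℂ) = (z + (w : ℂ) * u)
        * ((starRingEnd ℂ) z * u + (w : ℂ)) * u⁻¹ := by
      rw [hDnormSq t, ← hudef, ← Complex.mul_conj]
      rw [map_add, map_mul, Complex.conj_ofReal]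
      have hcu : (starRingEnd ℂ) u = u⁻¹ := eq_inv_of_mul_eq_one_right hu1
      rw [hcu]
      field_simp
      try ring
    simp only [deriv_circleMap, circleMap_zero, Complex.ofReal_one, one_mul, smul_eq_mul]
    rw [← hudef, hDC]
    have hI : Complex.I ≠ 0 := Complex.I_ne_zero
    have hup : u + z / (w : ℂ) ≠ 0 := by
      intro h
      apply hzu
      have h2 : (w : ℂ) * (u + z / (w : ℂ)) = 0 := by rw [h, mul_zero]
      rw [mul_add, mul_div_cancel₀ _ hwC0] at h2
      linear_combination h2
    have huq : u + ((w : ℝ) : ℂ) / (starRingEnd ℂ) z ≠ 0 := by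
      intro h
      apply hzu2
      have h2 : (starRingEnd ℂ) z * (u + (w : ℂ) / (starRingEnd ℂ) z) = 0 := by
        rw [h, mul_zero]
      rw [mul_add, mul_div_cancel₀ _ hzbar0] at h2
      linear_combination h2
    obtain ⟨P, hPdef⟩ : ∃ P : ℂ,
        P = (z + (w : ℂ) * u) * ((starRingEnd ℂ) z * u + (w : ℂ)) := ⟨_, rfl⟩
    have hPne : P ≠ 0 := by rw [hPdef]; exact mul_ne_zero hzu hzu2
    have e1' : u - p = (z + (w : ℂ) * u) / (w : ℂ) := by
      rw [eq_div_iff hwC0, hpdef, sub_mul, neg_div, neg_mul, div_mul_cancel₀ _ hwC0]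
      ring
    have e2' : u - q = ((starRingEnd ℂ) z * u + (w : ℂ)) / (starRingEnd ℂ) z := by
      rw [eq_div_iff hzbar0, hqdef, sub_mul, neg_div, neg_mul, div_mul_cancel₀ _ hzbar0]
      ring
    have e3 : (u - p)⁻¹ - (u - q)⁻¹ = ((sR : ℝ) : ℂ) / P := by
      rw [e1', e2', inv_div, inv_div, div_sub_div _ _ hzu hzu2, ← hPdef, hsC]
      congr 1
      ring
    rw [← hPdef]
    simp only [hfdef]
    rw [e3, mul_inv P u⁻¹, inv_inv]
    field_simp [hu0, hPne, hsC0, Complex.I_ne_zero]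
  -- the real integral of (D t)⁻¹
  have hkeyR : (∫ t in (0:ℝ)..(2 * Real.pi), (D t)⁻¹) = 2 * Real.pi / sR := by
    have h0 : (∫ t in (0:ℝ)..(2 * Real.pi), (((D t)⁻¹ : ℝ) : ℂ))
        = ((∫ t in (0:ℝ)..(2 * Real.pi), (D t)⁻¹ : ℝ) : ℂ) :=
      intervalIntegral.integral_ofReal
    have h1 : ((∫ t in (0:ℝ)..(2 * Real.pi), (D t)⁻¹ : ℝ) : ℂ)
        = ((2 * Real.pi / sR : ℝ) : ℂ) := by
      rw [← h0]
      simp only [Complex.ofReal_inv]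
      rw [← hkeyC, hintf]
      push_cast
      ring
    exact_mod_cast h1
  -- assemble
  have hiD : IntervalIntegrable (fun t => (D t)⁻¹) MeasureTheory.volume 0 (2 * Real.pi) :=
    (hDc.inv₀ hDne).intervalIntegrable 0 (2 * Real.pi)
  have hsplit : (∫ t in (0:ℝ)..(2 * Real.pi), v t)
      = (∫ t in (0:ℝ)..(2 * Real.pi), (1/2 : ℝ))
        + 2 * (2 * b - 1) * Real.cos a ^ 2 * ∫ t in (0:ℝ)..(2 * Real.pi), (D t)⁻¹ := by
    rw [← intervalIntegral.integral_const_mul,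
        ← intervalIntegral.integral_add intervalIntegrable_const (hiD.const_mul _)]
    apply intervalIntegral.integral_congr
    intro t _
    simp [hv t, div_eq_mul_inv]
  rw [hsplit, hkeyR, intervalIntegral.integral_const, smul_eq_mul]
  have hc0 : sR = -2 * (2 * (2 * b - 1) * Real.cos a ^ 2) := by
    rw [hsRdef, hr2, hwdef]; ring
  have hcne : 2 * (2 * b - 1) * Real.cos a ^ 2 ≠ 0 := by
    have : 2 * b - 1 ≠ 0 := fun h => hb2 (by linarith)
    positivity
  rw [hc0]
  have hb21 : 2 * b - 1 ≠ 0 := fun h => hb2 (by linarith)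
  field_simp
  ring
end

section
/- Suppose b > 1/2 and b ≠ 1. Then v is continuous and periodic of period 2π and ∫₀^{2π} v(t) dt = 2π; that is, the average of v over one period equals 1. -/
set_option maxHeartbeats 1000000

open intervalIntegral

/-- For `b > 1/2`, `b ≠ 1`: with `A = sin 2a`, `B = 2b - 1 + cos 2a`,
`D t = A² + B² + 4(1-b)(B cos t - A sin t) + 4(1-b)²` and
`v t = 1/2 + 2(2b-1) cos² a / D t`, the function `v` is continuous,
`2π`-periodic, and `∫₀^{2π} v = 2π`, i.e. the average of `v` over one period equals `1`. -/
theorem v_average_one (a b : ℝ)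
    (ha : |a| < Real.pi / 2) (hb2 : b ≠ 1 / 2) (hb1 : b ≠ 1)
    (hab : |a| + |b| > 0) (hbb : b > 1 / 2)
    (A B : ℝ) (hA : A = Real.sin (2 * a)) (hB : B = 2 * b - 1 + Real.cos (2 * a))
    (D v : ℝ → ℝ)
    (hD : ∀ t : ℝ, D t =
      A ^ 2 + B ^ 2 + 4 * (1 - b) * (B * Real.cos t - A * Real.sin t)
        + 4 * (1 - b) ^ 2)
    (hv : ∀ t : ℝ, v t = 1 / 2 + 2 * (2 * b - 1) * Real.cos a ^ 2 / D t) :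
    Continuous v ∧ (∀ t : ℝ, v (t + 2 * Real.pi) = v t) ∧
      (∫ t in (0:ℝ)..(2 * Real.pi), v t) = 2 * Real.pi := by
  obtain ⟨ha1, ha2⟩ := abs_lt.mp ha
  have hca : 0 < Real.cos a := Real.cos_pos_of_mem_Ioo ⟨ha1, ha2⟩
  have key : A ^ 2 + B ^ 2 = (2 * (1 - b)) ^ 2 + 4 * (2 * b - 1) * Real.cos a ^ 2 := by
    have h1 := Real.sin_sq_add_cos_sq (2 * a)
    have h2 := Real.cos_two_mul a
    rw [hA, hB]
    nlinarith [h1, h2]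
  have hkey2 : (2 * (1 - b)) ^ 2 < A ^ 2 + B ^ 2 := by nlinarith [mul_pos hca hca]
  have hR2 : 0 < A ^ 2 + B ^ 2 := lt_of_le_of_lt (sq_nonneg _) hkey2
  have hc : 2 * (2 * b - 1) * Real.cos a ^ 2 = (A ^ 2 + B ^ 2 - (2 * (1 - b)) ^ 2) / 2 := by
    linarith [key]
  have hgh : ∀ t : ℝ, (B * Real.cos t - A * Real.sin t) ^ 2
      + (B * Real.sin t + A * Real.cos t) ^ 2 = A ^ 2 + B ^ 2 := by
    intro t
    have h1 := Real.sin_sq_add_cos_sq t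
    nlinarith [h1]
  have hg2 : ∀ t : ℝ, (B * Real.cos t - A * Real.sin t) ^ 2 ≤ A ^ 2 + B ^ 2 := by
    intro t
    nlinarith [hgh t, sq_nonneg (B * Real.sin t + A * Real.cos t)]
  have hQ : ∀ t : ℝ, 0 < A ^ 2 + B ^ 2 + 2 * (1 - b) * (B * Real.cos t - A * Real.sin t) := by
    intro t
    have h1 : (2 * (1 - b)) ^ 2 * (B * Real.cos t - A * Real.sin t) ^ 2
        < (A ^ 2 + B ^ 2) ^ 2 := by
      have h2 := mul_le_mul_of_nonneg_left (hg2 t) (sq_nonneg (2 * (1 - b)))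
      nlinarith [mul_lt_mul_of_pos_right hkey2 hR2]
    nlinarith [h1, sq_nonneg (A ^ 2 + B ^ 2 + 2 * (1 - b) * (B * Real.cos t - A * Real.sin t)), hR2]
  have hDpos : ∀ t : ℝ, 0 < D t := by
    intro t
    rw [hD]
    have h2 : 0 ≤ (2 * (1 - b)) ^ 2 * ((A ^ 2 + B ^ 2) - (B * Real.cos t - A * Real.sin t) ^ 2) :=
      mul_nonneg (sq_nonneg _) (by linarith [hg2 t])
    nlinarith [mul_pos (hQ t) (hQ t), h2, hR2]
  have hDfun : D = fun t => A ^ 2 + B ^ 2 + 4 * (1 - b) * (B * Real.cos t - A * Real.sin t)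
      + 4 * (1 - b) ^ 2 := funext hD
  have hDc : Continuous D := by rw [hDfun]; fun_prop
  have hvfun : v = fun t => 1 / 2 + 2 * (2 * b - 1) * Real.cos a ^ 2 / D t := funext hv
  have hcont : Continuous v := by
    rw [hvfun]
    exact continuous_const.add (continuous_const.div hDc fun t => (hDpos t).ne')
  refine ⟨hcont, ?_, ?_⟩
  · intro t
    have hDper : D (t + 2 * Real.pi) = D t := by
      rw [hD, hD]
      simp [Real.sin_add, Real.cos_add]
    rw [hv, hv, hDper]
  · have hder : ∀ t : ℝ, HasDerivAt (fun s => s - Real.arctan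
        (2 * (1 - b) * (B * Real.sin s + A * Real.cos s)
          / (A ^ 2 + B ^ 2 + 2 * (1 - b) * (B * Real.cos s - A * Real.sin s)))) (v t) t := by
      intro t
      have hn : HasDerivAt (fun s => 2 * (1 - b) * (B * Real.sin s + A * Real.cos s))
          (2 * (1 - b) * (B * Real.cos t - A * Real.sin t)) t := by
        have h := (((Real.hasDerivAt_sin t).const_mul B).add
          ((Real.hasDerivAt_cos t).const_mul A)).const_mul (2 * (1 - b))
        refine h.congr_deriv ?_
        ring
      have hdd : HasDerivAt (fun s => A ^ 2 + B ^ 2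
            + 2 * (1 - b) * (B * Real.cos s - A * Real.sin s))
          (2 * (1 - b) * (-(B * Real.sin t + A * Real.cos t))) t := by
        have h := ((((Real.hasDerivAt_cos t).const_mul B).sub
          ((Real.hasDerivAt_sin t).const_mul A)).const_mul (2 * (1 - b))).const_add
          (A ^ 2 + B ^ 2)
        refine h.congr_deriv ?_
        ring
      have hQ0 : (A ^ 2 + B ^ 2 + 2 * (1 - b) * (B * Real.cos t - A * Real.sin t)) ≠ 0 :=
        (hQ t).ne'
      have hdiv := hn.div hdd hQ0
      have harc := hdiv.arctan
      have hH := (hasDerivAt_id t).sub harc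
      refine hH.congr_deriv ?_
      simp only [Pi.div_apply]
      rw [hv t, hc, hD t]
      have hD0 := (hDpos t).ne'
      rw [hD t] at hD0
      have hE := (hgh t).symm
      set cg := B * Real.cos t - A * Real.sin t with hcg
      set ch := B * Real.sin t + A * Real.cos t with hch
      rw [hE] at hQ0 hD0 ⊢
      have hS : cg ^ 2 + ch ^ 2 ≠ 0 := by rw [← hE]; exact hR2.ne'
      have hX : 1 + (2 * (1 - b) * ch / (cg ^ 2 + ch ^ 2 + 2 * (1 - b) * cg)) ^ 2
          = (cg ^ 2 + ch ^ 2) * (cg ^ 2 + ch ^ 2 + 4 * (1 - b) * cg + 4 * (1 - b) ^ 2)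
            / (cg ^ 2 + ch ^ 2 + 2 * (1 - b) * cg) ^ 2 := by
        field_simp
        ring
      rw [hX]
      have hD0' : cg ^ 2 + ch ^ 2 + cg * 4 * (1 - b) + 4 * (1 - b) ^ 2 ≠ 0 := by
        convert hD0 using 1; ring
      have hQ0' : cg ^ 2 + ch ^ 2 + cg * (1 - b) * 2 ≠ 0 := by
        convert hQ0 using 1; ring
      field_simp
      ring
    have hint : IntervalIntegrable v MeasureTheory.volume 0 (2 * Real.pi) :=
      hcont.intervalIntegrable _ _
    rw [integral_eq_sub_of_hasDerivAt (fun t _ => hder t) hint]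
    simp [Real.sin_add, Real.cos_add]
end

section
/- Suppose b < 1/2 and let x : ℝ → ℝ be a differentiable function with x'(t) = v(t) for all t (for instance x(t) = a + ∫₀ᵗ v(s) ds). Then x is periodic of period 2π: x(t + 2π) = x(t) for all t ∈ ℝ. -/
lemma arctan_deriv_aux (s n c K : ℝ) (hs : s ≠ 0) (hP : s ^ 2 + n ^ 2 ≠ 0)
    (he : s ^ 2 + n ^ 2 - 2 * c * s = 4 * K) :
    1 / (1 + (n / s) ^ 2) * (((s - c) * s - n * -n) / s ^ 2)
      = 1 / 2 + 2 * K / (s ^ 2 + n ^ 2) := by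
  have h1 : 1 + (n / s) ^ 2 = (s ^ 2 + n ^ 2) / s ^ 2 := by field_simp
  rw [h1]
  field_simp
  linear_combination he

/-- For `b < 1/2`: if `x : ℝ → ℝ` is differentiable with `x' = v`, where
`v t = 1/2 + 2(2b-1) cos² a / D t` and
`D t = A² + B² + 4(1-b)(B cos t - A sin t) + 4(1-b)²` with `A = sin 2a`,
`B = 2b - 1 + cos 2a`, then `x` is periodic of period `2π`. -/
theorem solution_periodic (a b : ℝ)
    (ha : |a| < Real.pi / 2) (hb2 : b ≠ 1 / 2) (hb1 : b ≠ 1)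
    (hab : |a| + |b| > 0) (hbb : b < 1 / 2)
    (A B : ℝ) (hA : A = Real.sin (2 * a)) (hB : B = 2 * b - 1 + Real.cos (2 * a))
    (D v : ℝ → ℝ)
    (hD : ∀ t : ℝ, D t =
      A ^ 2 + B ^ 2 + 4 * (1 - b) * (B * Real.cos t - A * Real.sin t)
        + 4 * (1 - b) ^ 2)
    (hv : ∀ t : ℝ, v t = 1 / 2 + 2 * (2 * b - 1) * Real.cos a ^ 2 / D t)
    (x : ℝ → ℝ) (hx : Differentiable ℝ x) (hxv : ∀ t : ℝ, deriv x t = v t) :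
    ∀ t : ℝ, x (t + 2 * Real.pi) = x t := by
  obtain ⟨ha1, ha2⟩ := abs_lt.mp ha
  have hcos : 0 < Real.cos a := Real.cos_pos_of_mem_Ioo ⟨by linarith, ha2⟩
  set c : ℝ := 2 * (1 - b) with hc
  have hc0 : 0 < c := by rw [hc]; linarith
  have hk : 4 * (2 * b - 1) * Real.cos a ^ 2 = A ^ 2 + B ^ 2 - c ^ 2 := by
    rw [hA, hB, hc]
    linear_combination (-1) * Real.sin_sq_add_cos_sq (2 * a) - 2 * (2 * b - 1) * Real.cos_two_mul a
  have hpq : A ^ 2 + B ^ 2 < c ^ 2 := by nlinarith [mul_pos hcos hcos]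
  set N : ℝ → ℝ := fun t => B * Real.sin t + A * Real.cos t with hN
  set M : ℝ → ℝ := fun t => c + (B * Real.cos t - A * Real.sin t) with hM
  have hMpos : ∀ t, 0 < M t := by
    intro t
    have h1 := Real.sin_sq_add_cos_sq t
    simp only [hM]
    nlinarith [sq_nonneg (A * Real.cos t + B * Real.sin t),
      sq_nonneg (c + (B * Real.cos t - A * Real.sin t))]
  have hDt : ∀ t, D t = M t ^ 2 + N t ^ 2 := by
    intro t
    rw [hD]
    simp only [hM, hN, hc]
    linear_combination (-(A ^ 2 + B ^ 2)) * Real.sin_sq_add_cos_sq t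
  have hDpos : ∀ t, 0 < D t := by
    intro t
    rw [hDt t]
    have := hMpos t
    positivity
  set y : ℝ → ℝ := fun t => Real.arctan (N t / M t) with hy
  have hyd : ∀ t, HasDerivAt y (v t) t := by
    intro t
    have hNd : HasDerivAt N (B * Real.cos t - A * Real.sin t) t := by
      have := ((Real.hasDerivAt_sin t).const_mul B).add ((Real.hasDerivAt_cos t).const_mul A)
      simpa [hN, Pi.add_def] using this.congr_deriv (by ring)
    have hMd : HasDerivAt M (-(N t)) t := by
      have := (((Real.hasDerivAt_cos t).const_mul B).sub
        ((Real.hasDerivAt_sin t).const_mul A)).const_add c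
      simpa [hM, hN] using this.congr_deriv (by simp [hN]; ring)
    have hMne : M t ≠ 0 := (hMpos t).ne'
    have hdiv := hNd.div hMd hMne
    have harc := (Real.hasDerivAt_arctan (N t / M t)).comp t hdiv
    have hu : B * Real.cos t - A * Real.sin t = M t - c := by simp [hM]
    have hpn : M t ^ 2 + N t ^ 2 = A ^ 2 + B ^ 2 + 2 * c * M t - c ^ 2 := by
      simp only [hM, hN]
      linear_combination (A ^ 2 + B ^ 2) * Real.sin_sq_add_cos_sq t
    have hP : M t ^ 2 + N t ^ 2 ≠ 0 := by rw [← hDt]; exact (hDpos t).ne'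
    have he : M t ^ 2 + N t ^ 2 - 2 * c * M t = 4 * ((2 * b - 1) * Real.cos a ^ 2) := by
      linear_combination hpn - hk
    have hval : (1 / (1 + (N t / M t) ^ 2)) *
        (((B * Real.cos t - A * Real.sin t) * M t - N t * -N t) / M t ^ 2) = v t := by
      rw [hv, hDt, hu,
        show 2 * (2 * b - 1) * Real.cos a ^ 2 = 2 * ((2 * b - 1) * Real.cos a ^ 2) by ring]
      exact arctan_deriv_aux (M t) (N t) c ((2 * b - 1) * Real.cos a ^ 2) hMne hP he
    rw [← hval]
    exact harc
  have hyd' : Differentiable ℝ y := fun t => (hyd t).differentiableAt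
  have hconst : ∀ s t : ℝ, x s - y s = x t - y t := by
    have hdz : ∀ t, deriv (fun t => x t - y t) t = 0 := by
      intro t
      rw [deriv_fun_sub (hx t) (hyd' t), hxv t, (hyd t).deriv]
      ring
    intro s t
    exact is_const_of_deriv_eq_zero (hx.sub hyd') hdz s t
  intro t
  have hyper : y (t + 2 * Real.pi) = y t := by
    simp [hy, hN, hM, Real.sin_add_two_pi, Real.cos_add_two_pi]
  have h := hconst (t + 2 * Real.pi) t
  linarith [h, hyper.le, hyper.ge]
end

section
/- Suppose b > 1/2 and b ≠ 1, and let x : ℝ → ℝ be a differentiable function with x'(t) = v(t) for all t (for instance x(t) = a + ∫₀ᵗ v(s) ds). Then the function t ↦ x(t) − t is periodic of period 2π: x(t + 2π) = x(t) + 2π for all t ∈ ℝ; in particular x is unbounded and not periodic. -/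
set_option maxHeartbeats 1600000 in
/-- For `b > 1/2`, `b ≠ 1`: if `x : ℝ → ℝ` is differentiable with `x' = v`,
where `v t = 1/2 + 2(2b-1) cos² a / D t` and
`D t = A² + B² + 4(1-b)(B cos t - A sin t) + 4(1-b)²` with `A = sin 2a`,
`B = 2b - 1 + cos 2a`, then `t ↦ x t - t` is `2π`-periodic, i.e.
`x (t + 2π) = x t + 2π` for all `t`; in particular `x` is unbounded and
not periodic. -/
theorem solution_quasiperiodic (a b : ℝ)
    (ha : |a| < Real.pi / 2) (hb2 : b ≠ 1 / 2) (hb1 : b ≠ 1)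
    (hab : |a| + |b| > 0) (hbb : b > 1 / 2)
    (A B : ℝ) (hA : A = Real.sin (2 * a)) (hB : B = 2 * b - 1 + Real.cos (2 * a))
    (D v : ℝ → ℝ)
    (hD : ∀ t : ℝ, D t =
      A ^ 2 + B ^ 2 + 4 * (1 - b) * (B * Real.cos t - A * Real.sin t)
        + 4 * (1 - b) ^ 2)
    (hv : ∀ t : ℝ, v t = 1 / 2 + 2 * (2 * b - 1) * Real.cos a ^ 2 / D t)
    (x : ℝ → ℝ) (hx : Differentiable ℝ x) (hxv : ∀ t : ℝ, deriv x t = v t) :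
    (∀ t : ℝ, x (t + 2 * Real.pi) = x t + 2 * Real.pi) ∧
      (¬ ∃ M : ℝ, ∀ t : ℝ, |x t| ≤ M) ∧
      (¬ ∃ T : ℝ, T > 0 ∧ ∀ t : ℝ, x (t + T) = x t) := by
  have hpi := Real.pi_pos
  obtain ⟨ha1, ha2⟩ := abs_lt.mp ha
  have hca : 0 < Real.cos a := Real.cos_pos_of_mem_Ioo ⟨by linarith, ha2⟩
  obtain ⟨c, hc⟩ : ∃ c : ℝ, c = 2 * (1 - b) := ⟨_, rfl⟩
  obtain ⟨K, hKdef⟩ : ∃ K : ℝ, K = 4 * (2 * b - 1) * Real.cos a ^ 2 := ⟨_, rfl⟩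
  obtain ⟨R2, hR2def⟩ : ∃ R2 : ℝ, R2 = A ^ 2 + B ^ 2 := ⟨_, rfl⟩
  have hK : 0 < K := by
    have h1 : 0 < Real.cos a ^ 2 := by positivity
    have hb' : 0 < 2 * b - 1 := by linarith
    rw [hKdef]; nlinarith
  have hR2 : R2 = c ^ 2 + K := by
    have h1 := Real.sin_sq_add_cos_sq (2 * a)
    have h2 := Real.cos_two_mul a
    rw [hR2def, hA, hB, hKdef, hc]
    nlinarith [h1, h2]
  have hR2pos : 0 < R2 := by nlinarith [sq_nonneg c]
  have hDalt : ∀ t, D t = R2 + 2 * c * (B * Real.cos t - A * Real.sin t) + c ^ 2 := by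
    intro t; rw [hD t, hR2def, hc]; ring
  have hsw : ∀ t, (B * Real.cos t - A * Real.sin t) ^ 2
      + (A * Real.cos t + B * Real.sin t) ^ 2 = R2 := by
    intro t
    have h1 := Real.sin_sq_add_cos_sq t
    rw [hR2def]; nlinarith [h1]
  have hDpos : ∀ t, 0 < D t := by
    intro t
    rw [hDalt t]
    have h1 := hsw t
    nlinarith [sq_nonneg (B * Real.cos t - A * Real.sin t + c),
      sq_nonneg (B * Real.cos t - A * Real.sin t - c),
      sq_nonneg (A * Real.cos t + B * Real.sin t), mul_pos hK hK]
  have hnum : ∀ t, R2 + c * (B * Real.cos t - A * Real.sin t) = (D t + K) / 2 := by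
    intro t; rw [hDalt t, hR2]; ring
  have hnumpos : ∀ t, 0 < R2 + c * (B * Real.cos t - A * Real.sin t) := by
    intro t; rw [hnum t]; have := hDpos t; linarith
  have hvD : ∀ t, v t = (R2 + c * (B * Real.cos t - A * Real.sin t)) / D t := by
    intro t
    have hKhalf : 2 * (2 * b - 1) * Real.cos a ^ 2 = K / 2 := by rw [hKdef]; ring
    rw [hv t, hKhalf, hnum t]
    have hD0 : D t ≠ 0 := (hDpos t).ne'
    field_simp
  -- complex setup
  obtain ⟨u, hu⟩ : ∃ u : ℂ, u = ((c * B / R2 : ℝ) : ℂ) - ((c * A / R2 : ℝ) : ℂ) * Complex.I :=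
    ⟨_, rfl⟩
  have hexp : ∀ t : ℝ, Complex.exp (-(t : ℂ) * Complex.I)
      = ((Real.cos t : ℝ) : ℂ) - ((Real.sin t : ℝ) : ℂ) * Complex.I := by
    intro t
    rw [Complex.exp_mul_I]
    rw [show (-(t : ℂ)) = ((-t : ℝ) : ℂ) by push_cast; ring]
    rw [← Complex.ofReal_cos, ← Complex.ofReal_sin, Real.cos_neg, Real.sin_neg]
    push_cast; ring
  have hure : u.re = c * B / R2 := by rw [hu]; simp
  have huim : u.im = -(c * A / R2) := by rw [hu]; simp
  have hgre : ∀ t : ℝ, (1 + u * Complex.exp (-(t : ℂ) * Complex.I)).re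
      = (R2 + c * (B * Real.cos t - A * Real.sin t)) / R2 := by
    intro t
    rw [hexp t]
    simp only [Complex.add_re, Complex.one_re, Complex.mul_re, Complex.sub_re, Complex.sub_im,
      Complex.ofReal_re, Complex.ofReal_im, Complex.mul_im, Complex.I_re, Complex.I_im,
      hure, huim]
    field_simp
    ring
  have hgim : ∀ t : ℝ, (1 + u * Complex.exp (-(t : ℂ) * Complex.I)).im
      = -(c * (A * Real.cos t + B * Real.sin t)) / R2 := by
    intro t
    rw [hexp t]
    simp only [Complex.add_im, Complex.one_im, Complex.mul_re, Complex.sub_re, Complex.sub_im,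
      Complex.ofReal_re, Complex.ofReal_im, Complex.mul_im, Complex.I_re, Complex.I_im,
      hure, huim]
    field_simp
    ring
  have hns : ∀ t : ℝ, Complex.normSq (1 + u * Complex.exp (-(t : ℂ) * Complex.I))
      = D t / R2 := by
    intro t
    rw [Complex.normSq_apply, hgre t, hgim t, hDalt t]
    have h1 := hsw t
    field_simp
    linear_combination c ^ 2 * h1
  have hgne : ∀ t : ℝ, (1 + u * Complex.exp (-(t : ℂ) * Complex.I)) ≠ 0 := by
    intro t h0
    have h1 : Complex.normSq (1 + u * Complex.exp (-(t : ℂ) * Complex.I)) = 0 := by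
      rw [h0]; simp
    rw [hns t] at h1
    rcases div_eq_zero_iff.mp h1 with h | h
    · exact absurd h (hDpos t).ne'
    · exact absurd h hR2pos.ne'
  have hgne : ∀ t : ℝ, (1 + u * Complex.exp (-(t : ℂ) * Complex.I)) ≠ 0 := by
    intro t h0
    have h1 : Complex.normSq (1 + u * Complex.exp (-(t : ℂ) * Complex.I)) = 0 := by
      rw [h0]; simp
    rw [hns t] at h1
    rcases div_eq_zero_iff.mp h1 with h | h
    · exact absurd h (hDpos t).ne'
    · exact absurd h hR2pos.ne'
  obtain ⟨F, hFdef⟩ : ∃ F : ℝ → ℝ, F = fun t : ℝ =>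
      t + (Complex.log (1 + u * Complex.exp (-(t : ℂ) * Complex.I))).im := ⟨_, rfl⟩
  have hder : ∀ t : ℝ, HasDerivAt F (v t) t := by
    intro t
    have he : HasDerivAt (fun s : ℂ => Complex.exp (-s * Complex.I))
        (Complex.exp (-(t : ℂ) * Complex.I) * (-1 * Complex.I)) (t : ℂ) :=
      (((hasDerivAt_id (t : ℂ)).neg).mul_const Complex.I).cexp
    have h1 : HasDerivAt (fun s : ℂ => 1 + u * Complex.exp (-s * Complex.I))
        (u * (Complex.exp (-(t : ℂ) * Complex.I) * (-1 * Complex.I))) (t : ℂ) :=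
      (he.const_mul u).const_add 1
    have hre : 0 < (1 + u * Complex.exp (-(t : ℂ) * Complex.I)).re := by
      rw [hgre t]; exact div_pos (hnumpos t) hR2pos
    have hlog : HasDerivAt Complex.log (1 + u * Complex.exp (-(t : ℂ) * Complex.I))⁻¹
        (1 + u * Complex.exp (-(t : ℂ) * Complex.I)) :=
      Complex.hasDerivAt_log (Complex.mem_slitPlane_iff.2 (Or.inl hre))
    have h2 := hlog.comp (t : ℂ) h1
    have h3 := h2.comp_ofReal
    have h4 := Complex.imCLM.hasFDerivAt.comp_hasDerivAt t h3
    have h5 := (hasDerivAt_id t).add h4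
    have key : (1 : ℝ) + Complex.imCLM
        ((1 + u * Complex.exp (-(t : ℂ) * Complex.I))⁻¹
          * (u * (Complex.exp (-(t : ℂ) * Complex.I) * (-1 * Complex.I)))) = v t := by
      have hue : u * Complex.exp (-(t : ℂ) * Complex.I)
          = (1 + u * Complex.exp (-(t : ℂ) * Complex.I)) - 1 := by ring
      have e1 : (1 + u * Complex.exp (-(t : ℂ) * Complex.I))⁻¹
          * (u * (Complex.exp (-(t : ℂ) * Complex.I) * (-1 * Complex.I)))
          = -Complex.I + (1 + u * Complex.exp (-(t : ℂ) * Complex.I))⁻¹ * Complex.I := by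
        rw [show u * (Complex.exp (-(t : ℂ) * Complex.I) * (-1 * Complex.I))
            = (1 + u * Complex.exp (-(t : ℂ) * Complex.I)) * (-Complex.I) + Complex.I from by
          ring]
        rw [mul_add, ← mul_assoc, inv_mul_cancel₀ (hgne t), one_mul]
      rw [e1]
      have e2 : (-Complex.I + (1 + u * Complex.exp (-(t : ℂ) * Complex.I))⁻¹ * Complex.I).im
          = -1 + ((1 + u * Complex.exp (-(t : ℂ) * Complex.I))⁻¹).re := by
        simp [Complex.add_im, Complex.mul_I_im]
      show (1 : ℝ) + (-Complex.I + (1 + u * Complex.exp (-(t : ℂ) * Complex.I))⁻¹ * Complex.I).im = v t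
      rw [e2, Complex.inv_re, hgre t, hns t, hvD t]
      have hD0 : D t ≠ 0 := (hDpos t).ne'
      field_simp
      ring
    have h6 : HasDerivAt F ((1 : ℝ) + Complex.imCLM
        ((1 + u * Complex.exp (-(t : ℂ) * Complex.I))⁻¹
          * (u * (Complex.exp (-(t : ℂ) * Complex.I) * (-1 * Complex.I))))) t := by
      rw [hFdef]
      exact h5
    rw [key] at h6
    exact h6
  have hFper : ∀ t : ℝ, F (t + 2 * Real.pi) = F t + 2 * Real.pi := by
    intro t
    have hEper : Complex.exp (-((t + 2 * Real.pi : ℝ) : ℂ) * Complex.I)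
        = Complex.exp (-(t : ℂ) * Complex.I) := by
      rw [show (-((t + 2 * Real.pi : ℝ) : ℂ) * Complex.I)
          = -(t : ℂ) * Complex.I + -(2 * (Real.pi : ℂ) * Complex.I) from by push_cast; ring]
      rw [Complex.exp_add, Complex.exp_neg, Complex.exp_two_pi_mul_I, inv_one, mul_one]
    rw [hFdef]
    simp only
    rw [hEper]
    ring
  have hcon : ∀ s t : ℝ, x s - F s = x t - F t := by
    apply is_const_of_deriv_eq_zero
    · exact fun t => (hx t).sub (hder t).differentiableAt
    · intro t
      have hx' : HasDerivAt x (v t) t := hxv t ▸ (hx t).hasDerivAt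
      have : HasDerivAt (fun t => x t - F t) (v t - v t) t := hx'.sub (hder t)
      simpa using this.deriv
  have part1 : ∀ t : ℝ, x (t + 2 * Real.pi) = x t + 2 * Real.pi := by
    intro t
    have h1 := hcon (t + 2 * Real.pi) t
    have h2 := hFper t
    linarith
  refine ⟨part1, ?_, ?_⟩
  · rintro ⟨M, hM⟩
    have hxn : ∀ n : ℕ, x (2 * Real.pi * n) = x 0 + 2 * Real.pi * n := by
      intro n
      induction n with
      | zero => simp
      | succ n ih =>
        have h1 := part1 (2 * Real.pi * n)
        push_cast
        push_cast at ih
        rw [show 2 * Real.pi * ((n : ℝ) + 1) = 2 * Real.pi * n + 2 * Real.pi from by ring,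
          h1, ih]
        ring
    obtain ⟨n, hn⟩ := exists_nat_gt ((M + |x 0|) / (2 * Real.pi))
    have h2pi : (0 : ℝ) < 2 * Real.pi := by linarith
    have hgt : M + |x 0| < 2 * Real.pi * n := by
      rw [div_lt_iff₀ h2pi] at hn; linarith
    have hMn := hM (2 * Real.pi * n)
    rw [hxn n] at hMn
    have hineq : (2 * Real.pi * n : ℝ) ≤ |x 0 + 2 * Real.pi * n| + |x 0| := by
      calc (2 * Real.pi * n : ℝ) = (x 0 + 2 * Real.pi * n) + (-(x 0)) := by ring
        _ ≤ |x 0 + 2 * Real.pi * n| + |(-(x 0))| := add_le_add (le_abs_self _) (le_abs_self _)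
        _ = |x 0 + 2 * Real.pi * n| + |x 0| := by rw [abs_neg]
    linarith
  · rintro ⟨T, hT, hper⟩
    have hmono : StrictMono x := by
      apply strictMono_of_deriv_pos
      intro t
      rw [hxv t, hvD t]
      exact div_pos (hnumpos t) (hDpos t)
    have h1 := hmono (show (0 : ℝ) < 0 + T by linarith)
    rw [hper 0] at h1
    exact lt_irrefl _ h1
end

section
/- Case b > 1/2, b ≠ 1: one has A² + B² > 4(1 − b)², and consequently the trigonometric equation B cos t − A sin t = 2(b − 1) has a real solution; in fact it has a smallest positive root t₀, and its solution set is an unbounded increasing sequence (t_j), j ∈ ℤ. -/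
lemma exists_min_pos_aux (ts : ℤ → ℝ) (hm : StrictMono ts)
    (hub : ¬ BddAbove (Set.range ts)) (hlb : ¬ BddBelow (Set.range ts)) :
    ∃ j₀ : ℤ, 0 < ts j₀ ∧ ∀ j, 0 < ts j → ts j₀ ≤ ts j := by
  classical
  obtain ⟨y, ⟨n, rfl⟩, hy⟩ := (not_bddAbove_iff.1 hub) 0
  obtain ⟨y, ⟨m, rfl⟩, hy'⟩ := (not_bddBelow_iff.1 hlb) 0
  obtain ⟨j₀, hj₀, hmin⟩ := Int.exists_least_of_bdd (P := fun j => 0 < ts j)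
    ⟨m, fun j hj => by
      by_contra hc
      push_neg at hc
      exact absurd hj (not_lt.2 (le_of_lt (lt_trans (hm hc) hy')))⟩ ⟨n, hy⟩
  exact ⟨j₀, hj₀, fun j hj => hm.monotone (hmin j hj)⟩


/-- Case `b > 1/2`, `b ≠ 1`: with `A = sin 2a` and `B = 2b - 1 + cos 2a` one
has `A² + B² > 4(1-b)²`; consequently the trigonometric equation
`B cos t - A sin t = 2(b-1)` has a real solution, in fact a smallest positive
root `t₀`, and its full solution set is the range of a strictly increasing
sequence `(t_j)`, `j ∈ ℤ`, unbounded in both directions. -/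
theorem roots_of_trig_equation (a b : ℝ)
    (ha : |a| < Real.pi / 2) (hb2 : b ≠ 1 / 2) (hb1 : b ≠ 1)
    (hab : |a| + |b| > 0) (hbb : b > 1 / 2)
    (A B : ℝ) (hA : A = Real.sin (2 * a)) (hB : B = 2 * b - 1 + Real.cos (2 * a)) :
    A ^ 2 + B ^ 2 > 4 * (1 - b) ^ 2 ∧
      (∃ t₀ : ℝ, 0 < t₀ ∧ B * Real.cos t₀ - A * Real.sin t₀ = 2 * (b - 1) ∧
        ∀ t : ℝ, 0 < t → B * Real.cos t - A * Real.sin t = 2 * (b - 1) →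
          t₀ ≤ t) ∧
      (∃ ts : ℤ → ℝ, StrictMono ts ∧
        {t : ℝ | B * Real.cos t - A * Real.sin t = 2 * (b - 1)} =
          Set.range ts ∧
        ¬ BddAbove (Set.range ts) ∧ ¬ BddBelow (Set.range ts)) := by
  have hpi := Real.pi_pos
  obtain ⟨ha1, ha2⟩ := abs_lt.1 ha
  have hcosa : 0 < Real.cos a := Real.cos_pos_of_mem_Ioo ⟨ha1, ha2⟩
  have hcos2 : Real.cos (2 * a) = 2 * Real.cos a ^ 2 - 1 := Real.cos_two_mul a
  have hpyth : Real.sin (2 * a) ^ 2 + Real.cos (2 * a) ^ 2 = 1 :=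
    Real.sin_sq_add_cos_sq _
  have h1 : A ^ 2 + B ^ 2 > 4 * (1 - b) ^ 2 := by
    subst hA hB
    nlinarith [mul_pos (show (0:ℝ) < 2 * b - 1 by linarith)
      (mul_pos hcosa hcosa)]
  -- notation
  set c : ℝ := 2 * (b - 1) with hc
  have hc2 : c ^ 2 = 4 * (1 - b) ^ 2 := by rw [hc]; ring
  have hcR : c ^ 2 < A ^ 2 + B ^ 2 := by rw [hc2]; exact h1
  set R : ℝ := Real.sqrt (A ^ 2 + B ^ 2) with hRdef
  have hABpos : 0 < A ^ 2 + B ^ 2 := lt_of_le_of_lt (sq_nonneg c) hcR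
  have hR : 0 < R := Real.sqrt_pos.2 hABpos
  have hR2 : R ^ 2 = A ^ 2 + B ^ 2 := Real.sq_sqrt hABpos.le
  have hz : (⟨B, A⟩ : ℂ) ≠ 0 := by
    intro h
    rw [Complex.ext_iff] at h
    simp at h
    rw [h.1, h.2] at hABpos
    norm_num at hABpos
  have habs : ‖(⟨B, A⟩ : ℂ)‖ = R := by
    rw [Complex.norm_def, Complex.normSq_mk, hRdef]
    congr 1; ring
  set φ : ℝ := Complex.arg ⟨B, A⟩ with hφ
  have hcosφ : Real.cos φ = B / R := by
    rw [hφ, Complex.cos_arg hz, habs]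
  have hsinφ : Real.sin φ = A / R := by
    rw [hφ, Complex.sin_arg, habs]
  have hid : ∀ t : ℝ, B * Real.cos t - A * Real.sin t = R * Real.cos (t + φ) := by
    intro t
    rw [Real.cos_add, hcosφ, hsinφ]
    field_simp
  -- bounds on c / R
  have hcltR : c < R := by nlinarith
  have hcgtR : -R < c := by nlinarith
  have hlt1 : c / R < 1 := (div_lt_one hR).2 hcltR
  have hgtm1 : -1 < c / R := by
    rw [neg_lt, ← neg_div]
    exact (div_lt_one hR).2 (by linarith)
  set θ : ℝ := Real.arccos (c / R) with hθdef
  have hθpos : 0 < θ := Real.arccos_pos.2 hlt1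
  have hθltpi : θ < Real.pi := by
    rcases lt_or_eq_of_le (Real.arccos_le_pi (c / R)) with h | h
    · exact h
    · exact absurd (Real.arccos_eq_pi.1 h) (by linarith)
  have hcosθ : Real.cos θ = c / R := Real.cos_arccos hgtm1.le hlt1.le
  -- characterization of solutions
  have hchar : ∀ t : ℝ, (B * Real.cos t - A * Real.sin t = c) ↔
      (∃ k : ℤ, t + φ = 2 * k * Real.pi + θ ∨ t + φ = 2 * k * Real.pi - θ) := by
    intro t
    rw [hid t, show (R * Real.cos (t + φ) = c) ↔ (Real.cos (t + φ) = c / R) by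
      rw [eq_div_iff hR.ne', mul_comm], ← hcosθ, eq_comm, Real.cos_eq_cos_iff]
  -- the sequence
  set ts : ℤ → ℝ := fun j =>
    if Even j then Real.pi * j - θ - φ else Real.pi * (j - 1) + θ - φ with hts
  have htseven : ∀ k : ℤ, ts (2 * k) = 2 * k * Real.pi - θ - φ := by
    intro k
    simp only [hts, if_pos (even_two_mul k)]
    push_cast; ring
  have htsodd : ∀ k : ℤ, ts (2 * k + 1) = 2 * k * Real.pi + θ - φ := by
    intro k
    have : ¬ Even (2 * k + 1) := by simp [Int.even_add_one]
    simp only [hts, if_neg this]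
    push_cast; ring
  have hmono : StrictMono ts := by
    apply strictMono_int_of_lt_succ
    intro j
    rcases Int.even_or_odd j with hj | hj
    · have hj1 : ¬ Even (j + 1) := by simp [Int.even_add_one, hj]
      simp only [hts, if_pos hj, if_neg hj1]
      push_cast
      linarith
    · have hj' : ¬ Even j := Int.not_even_iff_odd.2 hj
      have hj1 : Even (j + 1) := Int.even_add_one.2 hj'
      simp only [hts, if_neg hj', if_pos hj1]
      push_cast
      linarith
  have hrange : {t : ℝ | B * Real.cos t - A * Real.sin t = c} = Set.range ts := by
    ext t
    simp only [Set.mem_setOf_eq, Set.mem_range]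
    rw [hchar t]
    constructor
    · rintro ⟨k, hk | hk⟩
      · exact ⟨2 * k + 1, by rw [htsodd k]; linarith⟩
      · exact ⟨2 * k, by rw [htseven k]; linarith⟩
    · rintro ⟨j, rfl⟩
      rcases Int.even_or_odd' j with ⟨k, rfl | rfl⟩
      · exact ⟨k, Or.inr (by rw [htseven k]; ring)⟩
      · exact ⟨k, Or.inl (by rw [htsodd k]; ring)⟩
  have hub : ¬ BddAbove (Set.range ts) := by
    rw [not_bddAbove_iff]
    intro x
    obtain ⟨n, hn⟩ := exists_int_gt ((x + θ + φ) / (2 * Real.pi))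
    refine ⟨ts (2 * n), ⟨2 * n, rfl⟩, ?_⟩
    rw [htseven n]
    have := (div_lt_iff₀ (by linarith : (0:ℝ) < 2 * Real.pi)).1 hn
    linarith
  have hlb : ¬ BddBelow (Set.range ts) := by
    rw [not_bddBelow_iff]
    intro x
    obtain ⟨n, hn⟩ := exists_int_lt ((x - θ + φ + θ + θ) / (2 * Real.pi) - 1)
    refine ⟨ts (2 * n), ⟨2 * n, rfl⟩, ?_⟩
    rw [htseven n]
    have h2 : (n : ℝ) < (x - θ + φ + θ + θ) / (2 * Real.pi) := by linarith
    have := (lt_div_iff₀ (by linarith : (0:ℝ) < 2 * Real.pi)).1 h2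
    linarith
  obtain ⟨j₀, hj₀pos, hj₀min⟩ := exists_min_pos_aux ts hmono hub hlb
  refine ⟨h1, ⟨ts j₀, hj₀pos, ?_, ?_⟩, ⟨ts, hmono, hrange, hub, hlb⟩⟩
  · have : ts j₀ ∈ {t : ℝ | B * Real.cos t - A * Real.sin t = c} := by
      rw [hrange]; exact ⟨j₀, rfl⟩
    exact this
  · intro t ht hroot
    have : t ∈ Set.range ts := by rw [← hrange]; exact hroot
    obtain ⟨j, rfl⟩ := this
    exact hj₀min j ht
end

section
/- Suppose b > 1/2 and b ≠ 1. If t₀ ∈ ℝ satisfies B cos t₀ − A sin t₀ = 2(b − 1) (i.e., the denominator 2(1 − b) + B cos t₀ − A sin t₀ of X vanishes), then v(t₀) = 1; that is, the orbit crosses the interface line x' = 1 exactly at the points where x is an odd integer multiple of π/2. -/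
/-- Case `b > 1/2`, `b ≠ 1`: with `A = sin 2a`, `B = 2b - 1 + cos 2a`,
`D t = A² + B² + 4(1-b)(B cos t - A sin t) + 4(1-b)²` and
`v t = 1/2 + 2(2b-1) cos² a / D t`: if `t₀` satisfies
`B cos t₀ - A sin t₀ = 2(b-1)` (so the denominator of `X` vanishes at `t₀`),
then `v t₀ = 1`; the orbit crosses the interface line `x' = 1` exactly at
the points where `x` is an odd multiple of `π/2`. -/
theorem crossing_interface (a b : ℝ)
    (ha : |a| < Real.pi / 2) (hb2 : b ≠ 1 / 2) (hb1 : b ≠ 1)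
    (hab : |a| + |b| > 0) (hbb : b > 1 / 2)
    (A B : ℝ) (hA : A = Real.sin (2 * a)) (hB : B = 2 * b - 1 + Real.cos (2 * a))
    (D v : ℝ → ℝ)
    (hD : ∀ t : ℝ, D t =
      A ^ 2 + B ^ 2 + 4 * (1 - b) * (B * Real.cos t - A * Real.sin t)
        + 4 * (1 - b) ^ 2)
    (hv : ∀ t : ℝ, v t = 1 / 2 + 2 * (2 * b - 1) * Real.cos a ^ 2 / D t) :
    ∀ t₀ : ℝ, B * Real.cos t₀ - A * Real.sin t₀ = 2 * (b - 1) → v t₀ = 1 := by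
  intro t₀ ht
  have hcos : Real.cos a ≠ 0 := by
    have := Real.cos_pos_of_mem_Ioo (Set.mem_Ioo.2 ⟨neg_lt_of_abs_lt ha, lt_of_abs_lt ha⟩)
    linarith
  have hb' : 2 * b - 1 ≠ 0 := by
    intro h; apply hb2; linarith
  have hD0 : D t₀ = 4 * (2 * b - 1) * Real.cos a ^ 2 := by
    rw [hD, ht, hA, hB]
    have h1 := Real.sin_sq_add_cos_sq (2 * a)
    have h2 := Real.cos_two_mul a
    nlinarith [h1, h2]
  rw [hv, hD0]
  field_simp
  ring
end

section
/- Suppose b > 1/2 and b ≠ 1, and set c = (2b − 1)cos²a/(1 − b)². Then c > 0 and for every t ∈ ℝ one has √(1+c)/(√(1+c) + 1) ≤ v(t) ≤ √(1+c)/(√(1+c) − 1); that is, the orbit stays in the strip between the lines x' = √(1+c)/(√(1+c)+1) and x' = √(1+c)/(√(1+c)−1). -/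
set_option maxHeartbeats 1000000


/-- Case `b > 1/2`, `b ≠ 1`: with `c = (2b-1) cos² a / (1-b)²`,
`A = sin 2a`, `B = 2b - 1 + cos 2a`,
`D t = A² + B² + 4(1-b)(B cos t - A sin t) + 4(1-b)²` and
`v t = 1/2 + 2(2b-1) cos² a / D t`, one has `c > 0` and for all `t`
`√(1+c)/(√(1+c)+1) ≤ v t ≤ √(1+c)/(√(1+c)-1)`: the orbit stays in the strip
between the lines `x' = √(1+c)/(√(1+c)+1)` and `x' = √(1+c)/(√(1+c)-1)`. -/
theorem orbit_in_strip (a b c : ℝ)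
    (ha : |a| < Real.pi / 2) (hb2 : b ≠ 1 / 2) (hb1 : b ≠ 1)
    (hab : |a| + |b| > 0) (hbb : b > 1 / 2)
    (A B : ℝ) (hA : A = Real.sin (2 * a)) (hB : B = 2 * b - 1 + Real.cos (2 * a))
    (hc : c = (2 * b - 1) * Real.cos a ^ 2 / (1 - b) ^ 2)
    (D v : ℝ → ℝ)
    (hD : ∀ t : ℝ, D t =
      A ^ 2 + B ^ 2 + 4 * (1 - b) * (B * Real.cos t - A * Real.sin t)
        + 4 * (1 - b) ^ 2)
    (hv : ∀ t : ℝ, v t = 1 / 2 + 2 * (2 * b - 1) * Real.cos a ^ 2 / D t) :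
    c > 0 ∧
      ∀ t : ℝ,
        Real.sqrt (1 + c) / (Real.sqrt (1 + c) + 1) ≤ v t ∧
        v t ≤ Real.sqrt (1 + c) / (Real.sqrt (1 + c) - 1) := by

  -- basic positivity facts
  have hcos : 0 < Real.cos a := by
    rcases abs_lt.mp ha with ⟨h1, h2⟩
    exact Real.cos_pos_of_mem_Ioo ⟨by linarith, h2⟩
  have hbpos : 0 < 2 * b - 1 := by linarith
  have h1b : (1 - b) ≠ 0 := by
    intro h; exact hb1 (by linarith)
  set K : ℝ := 4 * (2 * b - 1) * Real.cos a ^ 2 with hKdef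
  set q : ℝ := 4 * (1 - b) ^ 2 with hqdef
  have hK : 0 < K := by positivity
  have hq : 0 < q := by positivity
  set s : ℝ := Real.sqrt q with hsdef
  set r : ℝ := Real.sqrt (q + K) with hrdef
  have hspos : 0 < s := Real.sqrt_pos.mpr hq
  have hs2 : s ^ 2 = q := Real.sq_sqrt hq.le
  have hr2 : r ^ 2 = q + K := Real.sq_sqrt (by positivity)
  have hrs : s < r := Real.sqrt_lt_sqrt hq.le (by linarith)
  have hrpos : 0 < r := lt_trans hspos hrs
  -- c = K / q
  have hcq : c = K / q := by
    rw [hc, hKdef, hqdef]; field_simp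
  have hcpos : 0 < c := by rw [hcq]; positivity
  have h1c : 1 + c = (q + K) / q := by
    rw [hcq]; field_simp
  have hsqrt : Real.sqrt (1 + c) = r / s := by
    rw [h1c, hrdef, hsdef, Real.sqrt_div (by positivity)]
  -- trig identity: A^2 + B^2 = q + K
  have hAB : A ^ 2 + B ^ 2 = q + K := by
    rw [hA, hB, hKdef, hqdef]
    have h1 := Real.sin_sq_add_cos_sq (2 * a)
    have h2 := Real.cos_two_mul a
    nlinarith [h1, h2]
  refine ⟨hcpos, fun t => ?_⟩
  -- bounds on D t
  have hX : (B * Real.cos t - A * Real.sin t) ^ 2 ≤ q + K := by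
    rw [← hAB]
    have hid : (B * Real.cos t - A * Real.sin t) ^ 2 + (A * Real.cos t + B * Real.sin t) ^ 2
        = (A ^ 2 + B ^ 2) * (Real.sin t ^ 2 + Real.cos t ^ 2) := by ring
    rw [Real.sin_sq_add_cos_sq, mul_one] at hid
    nlinarith [sq_nonneg (A * Real.cos t + B * Real.sin t)]
  have hosc : (4 * (1 - b) * (B * Real.cos t - A * Real.sin t)) ^ 2 ≤ (2 * s * r) ^ 2 := by
    have h4 : (4 * (1 - b)) ^ 2 = 4 * s ^ 2 := by rw [hs2, hqdef]; ring
    have : (4 * (1 - b) * (B * Real.cos t - A * Real.sin t)) ^ 2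
        = 4 * s ^ 2 * (B * Real.cos t - A * Real.sin t) ^ 2 := by
      rw [← h4]; ring
    rw [this]
    have : (2 * s * r) ^ 2 = 4 * s ^ 2 * (q + K) := by rw [← hr2]; ring
    rw [this]
    have hs2' : 0 ≤ 4 * s ^ 2 := by positivity
    nlinarith [hX]
  have hoscabs : -(2 * s * r) ≤ 4 * (1 - b) * (B * Real.cos t - A * Real.sin t) ∧
      4 * (1 - b) * (B * Real.cos t - A * Real.sin t) ≤ 2 * s * r := by
    constructor <;> nlinarith [hosc, mul_pos (mul_pos two_pos hspos) hrpos]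
  have hDlo : (r - s) ^ 2 ≤ D t := by
    rw [hD t]
    have : (r - s) ^ 2 = (q + K) + q - 2 * s * r := by rw [← hr2, ← hs2]; ring
    rw [this]
    have := hoscabs.1
    have hq' : 4 * (1 - b) ^ 2 = q := hqdef.symm
    linarith [hAB, this, hq'.le, hq'.ge]
  have hDhi : D t ≤ (r + s) ^ 2 := by
    rw [hD t]
    have : (r + s) ^ 2 = (q + K) + q + 2 * s * r := by rw [← hr2, ← hs2]; ring
    rw [this]
    have := hoscabs.2
    linarith [hAB]
  have hDpos : 0 < D t := lt_of_lt_of_le (pow_pos (sub_pos.mpr hrs) 2) hDlo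
  -- rewrite v
  have hvK : v t = 1 / 2 + (K / 2) / D t := by
    rw [hv t, hKdef]; ring
  have hK2 : K = r ^ 2 - s ^ 2 := by rw [hr2, hs2]; ring
  have hs0 : s ≠ 0 := hspos.ne'
  have hrs0 : (r + s) ≠ 0 := by positivity
  have hrsub : (0:ℝ) < r - s := by linarith
  have hrsub0 : (r - s) ≠ 0 := hrsub.ne'
  constructor
  · -- lower bound
    rw [hsqrt, hvK]
    have h1 : (K / 2) / ((r + s) ^ 2) ≤ (K / 2) / D t :=
      div_le_div_of_nonneg_left (by positivity) hDpos hDhi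
    have h2 : r / s / (r / s + 1) = r / (r + s) := by
      rw [div_add' _ _ _ hs0, div_div_div_cancel_right₀]
      · norm_num
      · exact hs0
    rw [h2]
    have h3 : r / (r + s) = 1 / 2 + (K / 2) / ((r + s) ^ 2) := by
      rw [hK2]
      field_simp
      ring
    linarith [h1]
  · -- upper bound
    rw [hsqrt, hvK]
    have h2 : r / s / (r / s - 1) = r / (r - s) := by
      rw [div_sub' hs0, div_div_div_cancel_right₀]
      · norm_num
      · exact hs0
    rw [h2]
    have h1 : (K / 2) / D t ≤ (K / 2) / ((r - s) ^ 2) :=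
      div_le_div_of_nonneg_left (by positivity) (by positivity) hDlo
    have h3 : r / (r - s) = 1 / 2 + (K / 2) / ((r - s) ^ 2) := by
      rw [hK2]
      field_simp
      ring
    linarith [h1]
end

section
/- Energy equation for the sister equation: let I ⊆ ℝ be an open interval and let x : I → ℝ be twice differentiable with x'(t) ≠ 1 and cos x(t) ≠ 0 for all t ∈ I, satisfying d/dt(cos x(t)/(1 − x'(t))) = +sin x(t) on I (equivalently, (cos x(t))·x''(t)/(1 − x'(t))² − (sin x(t))·x'(t)/(1 − x'(t)) = sin x(t)). Then the function t ↦ (1 − x'(t))·exp(x'(t))/cos(x(t)) is constant on I; equivalently (1 − x'(t))·exp(x'(t)) = c·cos x(t) on I for some constant c. -/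
/-- Energy equation for the sister equation `d/dt(cos x / (1 - x')) = sin x`:
if `I` is an open interval, `x` is twice differentiable on `I` (with first
derivative `x'` and second derivative `x''`), `x' ≠ 1` and `cos x ≠ 0` on `I`,
and `cos(x t) x''(t)/(1 - x'(t))² - sin(x t) x'(t)/(1 - x'(t)) = sin(x t)`
on `I`, then `t ↦ (1 - x'(t)) exp(x'(t)) / cos(x t)` is constant on `I`;
equivalently `(1 - x'(t)) exp(x'(t)) = c cos(x t)` on `I` for some constant
`c`. -/
theorem sister_energy_equation (I : Set ℝ) (hI : IsOpen I)
    (hI' : I.OrdConnected)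
    (x x' x'' : ℝ → ℝ)
    (hx1 : ∀ t ∈ I, HasDerivAt x (x' t) t)
    (hx2 : ∀ t ∈ I, HasDerivAt x' (x'' t) t)
    (hne : ∀ t ∈ I, x' t ≠ 1)
    (hcos : ∀ t ∈ I, Real.cos (x t) ≠ 0)
    (heq : ∀ t ∈ I,
      Real.cos (x t) * x'' t / (1 - x' t) ^ 2
        - Real.sin (x t) * x' t / (1 - x' t) = Real.sin (x t)) :
    (∀ s ∈ I, ∀ t ∈ I,
      (1 - x' s) * Real.exp (x' s) / Real.cos (x s)
        = (1 - x' t) * Real.exp (x' t) / Real.cos (x t)) ∧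
    ∃ c : ℝ, ∀ t ∈ I, (1 - x' t) * Real.exp (x' t) = c * Real.cos (x t) := by
  set F : ℝ → ℝ := fun t => (1 - x' t) * Real.exp (x' t) / Real.cos (x t) with hF
  have hF0 : ∀ t ∈ I, HasDerivAt F 0 t := by
    intro t ht
    have hsub : 1 - x' t ≠ 0 := sub_ne_zero.mpr (fun h => hne t ht h.symm)
    have key : Real.cos (x t) * x'' t = Real.sin (x t) * (1 - x' t) := by
      have h := heq t ht
      field_simp at h
      refine mul_right_cancel₀ hsub ?_
      linear_combination (1 - x' t) * h
    have hg : HasDerivAt (fun t => (1 - x' t) * Real.exp (x' t))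
        ((0 - x'' t) * Real.exp (x' t) + (1 - x' t) * (Real.exp (x' t) * x'' t)) t :=
      ((hasDerivAt_const t (1:ℝ)).sub (hx2 t ht)).mul ((hx2 t ht).exp)
    have hh : HasDerivAt (fun t => Real.cos (x t)) (-Real.sin (x t) * x' t) t :=
      (Real.hasDerivAt_cos (x t)).comp t (hx1 t ht)
    have hd := hg.div hh (hcos t ht)
    have hz : (((0 - x'' t) * Real.exp (x' t) + (1 - x' t) * (Real.exp (x' t) * x'' t)) * Real.cos (x t)
        - (1 - x' t) * Real.exp (x' t) * (-Real.sin (x t) * x' t)) / Real.cos (x t) ^ 2 = 0 := by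
      rw [div_eq_zero_iff]
      left
      linear_combination (-(x' t) * Real.exp (x' t)) * key
    rw [hz] at hd
    exact hd
  have hconst : ∀ s ∈ I, ∀ t ∈ I, F s = F t := by
    have main : ∀ s ∈ I, ∀ t ∈ I, s ≤ t → F t = F s := by
      intro s hs t ht hst
      have hIcc : Set.Icc s t ⊆ I := hI'.out hs ht
      have := constant_of_has_deriv_right_zero
        (f := F) (a := s) (b := t)
        (fun u hu => (hF0 u (hIcc hu)).continuousAt.continuousWithinAt)
        (fun u hu => (hF0 u (hIcc (Set.mem_Icc_of_Ico hu))).hasDerivWithinAt)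
      exact this t (Set.right_mem_Icc.mpr hst)
    intro s hs t ht
    rcases le_total s t with h | h
    · exact (main s hs t ht h).symm
    · exact main t ht s hs h
  refine ⟨hconst, ?_⟩
  rcases Set.eq_empty_or_nonempty I with hIe | ⟨t0, ht0⟩
  · exact ⟨0, fun t ht => absurd ht (by simp [hIe])⟩
  · refine ⟨F t0, fun t ht => ?_⟩
    have h1 : F t = F t0 := hconst t ht t0 ht0
    have h2 : F t * Real.cos (x t) = (1 - x' t) * Real.exp (x' t) :=
      div_mul_cancel₀ _ (hcos t ht)
    rw [← h2, h1]
end
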